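/- arXiv:2303.13292 — 6 statements merged into one kernel-verified Lean document; each statement's English description precedes it below -/
import Mathlib

section
/- If G is an n-vertex cubic (3-regular) connected graph with diameter at least 4 and girth at least 5, then there exist a vertex r of G and an r-unsolvable configuration on G of size n + 1; consequently π(G) ≥ n + 2. -/
namespace Pebbling

variable {V : Type*}

/-- A single pebbling move on configurations: remove two pebbles from `u`
(which must have at least two) and add one pebble to an adjacent vertex `w`. -/
def Move (G : SimpleGraph V) (C C' : V → ℕ) : Prop := by
  classical
  exact ∃ u w, G.Adj u w ∧ 2 ≤ C u ∧
    C' = Function.update (Function.update C u (C u - 2)) w (C w + 1)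

/-- A configuration `C` is `r`-solvable if some finite sequence of pebbling moves
starting from `C` produces a configuration with at least one pebble on `r`. -/
def Solvable (G : SimpleGraph V) (C : V → ℕ) (r : V) : Prop :=
  ∃ C', Relation.ReflTransGen (Move G) C C' ∧ 1 ≤ C' r

/-- The pebbling number `π(G, r)`: the least `t` such that every configuration of
size `t` is `r`-solvable. -/
noncomputable def pebblingNumberTo [Fintype V] (G : SimpleGraph V) (r : V) : ℕ :=
  sInf {t | ∀ C : V → ℕ, ∑ x, C x = t → Solvable G C r}

/-- The pebbling number `π(G)`: the maximum of `π(G, r)` over all vertices `r`. -/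
noncomputable def pebblingNumber [Fintype V] (G : SimpleGraph V) : ℕ :=
  Finset.univ.sup fun r => pebblingNumberTo G r

/-- A proper `n`-edge-coloring: a coloring of the edges with `n` colors such that
distinct edges sharing an endpoint receive different colors. -/
def HasProperEdgeColoring (G : SimpleGraph V) (n : ℕ) : Prop :=
  ∃ c : Sym2 V → Fin n, ∀ e₁ ∈ G.edgeSet, ∀ e₂ ∈ G.edgeSet,
    e₁ ≠ e₂ → (∃ x, x ∈ e₁ ∧ x ∈ e₂) → c e₁ ≠ c e₂

/-- A snark: a connected bridgeless cubic simple graph admitting no proper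
3-edge-coloring. -/
def IsSnark [Fintype V] (G : SimpleGraph V) [DecidableRel G.Adj] : Prop :=
  G.Connected ∧ (∀ v, G.degree v = 3) ∧ (∀ e, ¬ G.IsBridge e) ∧
    ¬ HasProperEdgeColoring G 3

/-! ### Auxiliary: a potential-function certificate for unsolvability -/

/-- The per-vertex contribution to the potential function. -/
def phiF (w d : V → ℤ) (v : V) (c : ℕ) : ℤ :=
  w v * c - if c % 2 = 1 then d v else 0

/-- The potential function certifying unsolvability. -/
def phi [Fintype V] (w d : V → ℤ) (C : V → ℕ) : ℤ := ∑ v, phiF w d v (C v)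

lemma phiF_nonneg (w d : V → ℤ) (v : V) (c : ℕ) (h0 : 0 ≤ d v) (hdw : d v ≤ w v) :
    0 ≤ phiF w d v c := by
  have hw : 0 ≤ w v := h0.trans hdw
  rcases Nat.eq_zero_or_pos c with hc | hc
  · subst hc; simp [phiF]
  · have h1 : (1 : ℤ) ≤ (c : ℤ) := by exact_mod_cast hc
    have hm : w v * 1 ≤ w v * c := mul_le_mul_of_nonneg_left h1 hw
    unfold phiF
    split <;> linarith

lemma phiF_lower (w d : V → ℤ) (v : V) (c : ℕ) (h0 : 0 ≤ d v) (hdw : d v ≤ w v)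
    (hc : 1 ≤ c) : w v - d v ≤ phiF w d v c := by
  have hw : 0 ≤ w v := h0.trans hdw
  have h1 : (1 : ℤ) ≤ (c : ℤ) := by exact_mod_cast hc
  have hm : w v * 1 ≤ w v * c := mul_le_mul_of_nonneg_left h1 hw
  unfold phiF
  split <;> linarith

lemma phi_move_le [Fintype V] (G : SimpleGraph V) (w d : V → ℤ)
    (hd0 : ∀ v, 0 ≤ d v)
    (hedge : ∀ x y, G.Adj x y → w y + d y ≤ 2 * w x)
    {C C' : V → ℕ} (h : Move G C C') : phi w d C' ≤ phi w d C := by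
  classical
  obtain ⟨x, y, hadj, hx2, rfl⟩ := h
  have hxy : x ≠ y := hadj.ne
  have hCval : ∀ v, (Function.update (Function.update C x (C x - 2)) y (C y + 1)) v
      = if v = y then C y + 1 else if v = x then C x - 2 else C v := by
    intro v
    by_cases h1 : v = y
    · subst h1; simp
    · by_cases h2 : v = x
      · subst h2; simp [Function.update_of_ne h1, if_neg h1]
      · simp [Function.update_of_ne h1, Function.update_of_ne h2, if_neg h1, if_neg h2]
  have key : ∀ v, phiF w d v ((Function.update (Function.update C x (C x - 2)) y (C y + 1)) v)
        - phiF w d v (C v)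
      = (if v = x then phiF w d x (C x - 2) - phiF w d x (C x) else 0)
        + (if v = y then phiF w d y (C y + 1) - phiF w d y (C y) else 0) := by
    intro v
    rw [hCval v]
    by_cases h1 : v = y
    · subst h1
      rw [if_pos rfl, if_pos rfl, if_neg (Ne.symm hxy)]
      ring
    · by_cases h2 : v = x
      · subst h2
        rw [if_neg h1, if_pos rfl, if_pos rfl, if_neg h1]
        ring
      · rw [if_neg h1, if_neg h2, if_neg h2, if_neg h1]
        ring
  have hbx : phiF w d x (C x - 2) - phiF w d x (C x) = -(2 * w x) := by
    obtain ⟨k, hk⟩ : ∃ k, C x = k + 2 := ⟨C x - 2, by omega⟩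
    rw [hk]
    have h2 : k + 2 - 2 = k := by omega
    rw [h2]
    have hpar : (k + 2) % 2 = k % 2 := by omega
    unfold phiF
    rw [hpar]
    split <;> · push_cast; ring
  have hby : phiF w d y (C y + 1) - phiF w d y (C y) ≤ w y + d y := by
    unfold phiF
    by_cases hp : C y % 2 = 1
    · have hp1 : ¬ ((C y + 1) % 2 = 1) := by omega
      rw [if_pos hp, if_neg hp1]
      push_cast
      nlinarith [hd0 y]
    · have hp1 : (C y + 1) % 2 = 1 := by omega
      rw [if_neg hp, if_pos hp1]
      push_cast
      nlinarith [hd0 y]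
  have hdiff : phi w d (Function.update (Function.update C x (C x - 2)) y (C y + 1))
      - phi w d C ≤ 0 := by
    rw [phi, phi, ← Finset.sum_sub_distrib]
    rw [Finset.sum_congr rfl (fun v _ => key v), Finset.sum_add_distrib,
      Finset.sum_ite_eq' Finset.univ x, Finset.sum_ite_eq' Finset.univ y]
    simp only [Finset.mem_univ, if_pos]
    have := hedge x y hadj
    linarith
  linarith

lemma phi_rtg_le [Fintype V] (G : SimpleGraph V) (w d : V → ℤ)
    (hd0 : ∀ v, 0 ≤ d v)
    (hedge : ∀ x y, G.Adj x y → w y + d y ≤ 2 * w x)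
    {C C' : V → ℕ} (h : Relation.ReflTransGen (Move G) C C') : phi w d C' ≤ phi w d C := by
  induction h with
  | refl => exact le_refl _
  | tail _ h2 ih => exact le_trans (phi_move_le G w d hd0 hedge h2) ih

lemma not_solvable_of_phi [Fintype V] (G : SimpleGraph V) (w d : V → ℤ)
    (hd0 : ∀ v, 0 ≤ d v) (hdw : ∀ v, d v ≤ w v)
    (hedge : ∀ x y, G.Adj x y → w y + d y ≤ 2 * w x)
    (r : V) (C : V → ℕ) (hphi : phi w d C < w r - d r) : ¬ Solvable G C r := by
  rintro ⟨C', hsteps, hr⟩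
  have h1 : phi w d C' ≤ phi w d C := phi_rtg_le G w d hd0 hedge hsteps
  have h2 : w r - d r ≤ phi w d C' := by
    calc w r - d r ≤ phiF w d r (C' r) := phiF_lower w d r (C' r) (hd0 r) (hdw r) hr
      _ ≤ ∑ v, phiF w d v (C' v) :=
        Finset.single_le_sum (fun v _ => phiF_nonneg w d v (C' v) (hd0 v) (hdw v))
          (Finset.mem_univ r)
  linarith

/-! ### Auxiliary: solvability of large configurations -/

lemma moves_chain [DecidableEq V] {G : SimpleGraph V} {x y : V} (hxy : G.Adj x y) :
    ∀ (k : ℕ) (C : V → ℕ), 2 * k ≤ C x →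
    Relation.ReflTransGen (Move G) C
      (Function.update (Function.update C x (C x - 2 * k)) y (C y + k)) := by
  have hne : x ≠ y := hxy.ne
  intro k
  induction k with
  | zero =>
    intro C h
    have h1 : Function.update (Function.update C x (C x - 2 * 0)) y (C y + 0)
        = C := by
      funext v
      by_cases h1 : v = y
      · subst h1; simp
      · by_cases h2 : v = x
        · subst h2; simp [Function.update_of_ne h1]
        · simp [Function.update_of_ne h1, Function.update_of_ne h2]
    rw [h1]
  | succ k ih =>
    intro C h
    set C1 := Function.update (Function.update C x (C x - 2)) y (C y + 1) with hC1
    have hmv : Move G C C1 := by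
      refine ⟨x, y, hxy, by omega, ?_⟩
      rw [hC1]; congr!
    have hC1x : C1 x = C x - 2 := by
      rw [hC1, Function.update_of_ne hne, Function.update_self]
    have hC1y : C1 y = C y + 1 := by rw [hC1, Function.update_self]
    have h2 : 2 * k ≤ C1 x := by omega
    have hrtg := ih C1 h2
    have heq : Function.update (Function.update C1 x (C1 x - 2 * k)) y (C1 y + k)
        = Function.update (Function.update C x (C x - 2 * (k + 1))) y (C y + (k + 1)) := by
      funext v
      by_cases h1 : v = y
      · subst h1; simp [hC1y]; omega
      · by_cases h3 : v = x
        · subst h3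
          rw [Function.update_of_ne h1, Function.update_of_ne h1,
            Function.update_self, Function.update_self, hC1x]
          omega
        · rw [Function.update_of_ne h1, Function.update_of_ne h1,
            Function.update_of_ne h3, Function.update_of_ne h3, hC1,
            Function.update_of_ne h1, Function.update_of_ne h3]
    rw [heq] at hrtg
    exact Relation.ReflTransGen.head hmv hrtg

lemma solvable_of_two_pow [DecidableEq V] {G : SimpleGraph V} (hconn : G.Connected) (r : V) :
    ∀ (n : ℕ) (v : V) (C : V → ℕ), G.dist v r = n → 2 ^ n ≤ C v → Solvable G C r := by
  intro n
  induction n with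
  | zero =>
    intro v C hd hc
    have hv : v = r := (hconn.dist_eq_zero_iff).mp hd
    subst hv
    exact ⟨C, Relation.ReflTransGen.refl, by simpa using hc⟩
  | succ n ih =>
    intro v C hd hc
    obtain ⟨p, hp⟩ := (hconn v r).exists_walk_length_eq_dist
    cases p with
    | nil =>
      rw [hd] at hp; simp at hp
    | @cons _ s _ hadj q =>
      have hq : q.length = n := by
        rw [hd] at hp
        simpa using hp
      have hds : G.dist s r = n := by
        have h1 : G.dist s r ≤ n := hq ▸ SimpleGraph.dist_le q
        have h2 : G.dist v r ≤ G.dist v s + G.dist s r := hconn.dist_triangle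
        have h3 : G.dist v s ≤ 1 := by
          have := SimpleGraph.dist_le (SimpleGraph.Walk.cons hadj SimpleGraph.Walk.nil)
          simpa using this
        omega
      have h2 : 2 * 2 ^ n ≤ C v := by
        have : 2 ^ (n + 1) = 2 * 2 ^ n := by ring
        omega
      have hrtg := moves_chain hadj (2 ^ n) C h2
      set C1 := Function.update (Function.update C v (C v - 2 * 2 ^ n)) s (C s + 2 ^ n) with hC1
      have hC1s : C1 s = C s + 2 ^ n := by rw [hC1, Function.update_self]
      obtain ⟨C2, hs2, hr2⟩ := ih s C1 hds (by omega)
      exact ⟨C2, hrtg.trans hs2, hr2⟩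

lemma exists_solvable_size [Fintype V] [DecidableEq V] {G : SimpleGraph V}
    (hconn : G.Connected) (r : V) (C : V → ℕ)
    (hC : ∑ x, C x = Fintype.card V * (2 ^ Fintype.card V - 1) + 1) :
    Solvable G C r := by
  have hex : ∃ v, 2 ^ Fintype.card V ≤ C v := by
    by_contra hcon
    push_neg at hcon
    have hle : ∑ x, C x ≤ ∑ _x : V, (2 ^ Fintype.card V - 1) :=
      Finset.sum_le_sum fun v _ => by have := hcon v; omega
    rw [Finset.sum_const, Finset.card_univ, smul_eq_mul] at hle
    omega
  obtain ⟨v, hv⟩ := hex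
  have hdlt : G.dist v r < Fintype.card V := by
    obtain ⟨p, hpath, hlen⟩ := (hconn v r).exists_path_of_dist
    rw [← hlen]
    exact hpath.length_lt
  refine solvable_of_two_pow hconn r (G.dist v r) v C rfl ?_
  exact le_trans (Nat.pow_le_pow_right (by norm_num) hdlt.le) hv

/-- an n-vertex cubic connected graph with diameter ≥ 4 and girth ≥ 5
has an r-unsolvable configuration of size n + 1 for some vertex r, hence
π(G) ≥ n + 2. -/
theorem cubic_diam4_girth5_unsolvable_config
    {V : Type*} [Fintype V] (G : SimpleGraph V) [DecidableRel G.Adj]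
    (hconn : G.Connected)
    (hcubic : ∀ v, G.degree v = 3)
    (hdiam : 4 ≤ G.diam)
    (hgirth : 5 ≤ G.girth) :
    (∃ r : V, ∃ C : V → ℕ, (∑ x, C x) = Fintype.card V + 1 ∧ ¬ Solvable G C r) ∧
      Fintype.card V + 2 ≤ pebblingNumber G := by
  classical
  haveI : Nonempty V := hconn.nonempty
  obtain ⟨r, u, hru⟩ := SimpleGraph.exists_dist_eq_diam (G := G)
  have hdist : 4 ≤ G.dist r u := by omega
  -- distance exclusions
  have hne_ru : r ≠ u := by
    intro h; rw [h, SimpleGraph.dist_self] at hdist; omega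
  have hnadj : ¬ G.Adj r u := by
    intro h
    have := SimpleGraph.dist_le (SimpleGraph.Walk.cons h SimpleGraph.Walk.nil)
    simp at this; omega
  have hd2 : ∀ x, G.Adj r x → G.Adj x u → False := by
    intro x h1 h2
    have := SimpleGraph.dist_le
      (SimpleGraph.Walk.cons h1 (SimpleGraph.Walk.cons h2 SimpleGraph.Walk.nil))
    simp at this; omega
  have hd3 : ∀ x y, G.Adj r x → G.Adj x y → G.Adj y u → False := by
    intro x y h1 h2 h3
    have := SimpleGraph.dist_le (SimpleGraph.Walk.cons h1
      (SimpleGraph.Walk.cons h2 (SimpleGraph.Walk.cons h3 SimpleGraph.Walk.nil)))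
    simp at this; omega
  -- the sets
  set A : Finset V := G.neighborFinset r with hA_def
  set B : Finset V := G.neighborFinset u with hB_def
  set NP : Finset V := B.biUnion (fun s => (G.neighborFinset s).erase u) with hNP_def
  set Z : Finset V := insert r (A ∪ B ∪ NP) with hZ_def
  set F : Finset V := Finset.univ \ insert u Z with hF_def
  have hmemA : ∀ x, x ∈ A ↔ G.Adj r x := by
    intro x; rw [hA_def, SimpleGraph.mem_neighborFinset]
  have hmemB : ∀ x, x ∈ B ↔ G.Adj u x := by
    intro x; rw [hB_def, SimpleGraph.mem_neighborFinset]
  have hFchar : ∀ v ∈ F, v ≠ u ∧ v ≠ r ∧ v ∉ A ∧ v ∉ B ∧ v ∉ NP := by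
    intro v hv
    rw [hF_def, hZ_def] at hv
    simp only [Finset.mem_sdiff, Finset.mem_univ, Finset.mem_insert, Finset.mem_union,
      true_and] at hv
    push_neg at hv
    tauto
  -- the weights
  set w : V → ℤ := fun v =>
    if v = r then 16 else if v ∈ A then 8 else if v = u then 1 else if v ∈ B then 2 else 4
    with hw_def
  set dd : V → ℤ := fun v => if v ∈ F then 4 else 0 with hdd_def
  have hw1 : ∀ v, (1 : ℤ) ≤ w v := by
    intro v; simp only [hw_def]; split_ifs <;> norm_num
  have hd0 : ∀ v, (0 : ℤ) ≤ dd v := by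
    intro v; simp only [hdd_def]; split_ifs <;> norm_num
  have hwF : ∀ v ∈ F, w v = 4 := by
    intro v hv
    obtain ⟨h1, h2, h3, h4, _⟩ := hFchar v hv
    simp only [hw_def]
    rw [if_neg h2, if_neg h3, if_neg h1, if_neg h4]
  have hdw : ∀ v, dd v ≤ w v := by
    intro v
    by_cases hv : v ∈ F
    · simp only [hdd_def]
      rw [if_pos hv, hwF v hv]
    · simp only [hdd_def]
      rw [if_neg hv]
      linarith [hw1 v]
  have hwr : w r = 16 := by simp only [hw_def]; simp
  have huA : u ∉ A := by
    intro h; exact hnadj ((hmemA u).mp h)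
  have hwu : w u = 1 := by
    simp only [hw_def]
    rw [if_neg hne_ru.symm, if_neg huA]
    simp
  have hu_notF : u ∉ F := by
    rw [hF_def]
    simp
  have hddu : dd u = 0 := by simp only [hdd_def]; rw [if_neg hu_notF]
  have hr_notF : r ∉ F := by
    rw [hF_def, hZ_def]
    simp
  have hddr : dd r = 0 := by simp only [hdd_def]; rw [if_neg hr_notF]
  have hwge4 : ∀ x, x ≠ u → x ∉ B → (4 : ℤ) ≤ w x := by
    intro x hxu hxB
    simp only [hw_def]
    by_cases h1 : x = r
    · rw [if_pos h1]; norm_num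
    · rw [if_neg h1]
      by_cases h2 : x ∈ A
      · rw [if_pos h2]; norm_num
      · rw [if_neg h2, if_neg hxu, if_neg hxB]
  have hwge2 : ∀ x, x ≠ u → (2 : ℤ) ≤ w x := by
    intro x hxu
    by_cases hxB : x ∈ B
    · simp only [hw_def]
      by_cases h1 : x = r
      · rw [if_pos h1]; norm_num
      · rw [if_neg h1]
        by_cases h2 : x ∈ A
        · rw [if_pos h2]; norm_num
        · rw [if_neg h2, if_neg hxu, if_pos hxB]
    · linarith [hwge4 x hxu hxB]
  -- the edge condition
  have hedge : ∀ x y, G.Adj x y → w y + dd y ≤ 2 * w x := by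
    intro x y hxy
    have hwx1 := hw1 x
    by_cases hyr : y = r
    · have hxy' : G.Adj x r := hyr ▸ hxy
      have hxA : x ∈ A := (hmemA x).mpr hxy'.symm
      have hxr : x ≠ r := hxy'.ne
      have hwx : w x = 8 := by
        simp only [hw_def]; rw [if_neg hxr, if_pos hxA]
      rw [hyr, hwr, hddr, hwx]; norm_num
    · by_cases hyA : y ∈ A
      · have hy_notF : y ∉ F := fun h => (hFchar y h).2.2.1 hyA
        have hwy : w y = 8 := by
          simp only [hw_def]; rw [if_neg hyr, if_pos hyA]
        have hddy : dd y = 0 := by simp only [hdd_def]; rw [if_neg hy_notF]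
        have hxu : x ≠ u := by
          intro h; subst h; exact hd2 y ((hmemA y).mp hyA) hxy.symm
        have hxB : x ∉ B := by
          intro hB; exact hd3 y x ((hmemA y).mp hyA) hxy.symm ((hmemB x).mp hB).symm
        have hwx4 : (4 : ℤ) ≤ w x := hwge4 x hxu hxB
        rw [hwy, hddy]; linarith
      · by_cases hyu : y = u
        · rw [hyu, hwu, hddu]
          linarith
        · by_cases hyB : y ∈ B
          · have hy_notF : y ∉ F := fun h => (hFchar y h).2.2.2.1 hyB
            have hwy : w y = 2 := by
              simp only [hw_def]; rw [if_neg hyr, if_neg hyA, if_neg hyu, if_pos hyB]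
            have hddy : dd y = 0 := by simp only [hdd_def]; rw [if_neg hy_notF]
            rw [hwy, hddy]; linarith
          · have hwy : w y = 4 := by
              simp only [hw_def]; rw [if_neg hyr, if_neg hyA, if_neg hyu, if_neg hyB]
            have hxu : x ≠ u := by
              intro h; subst h; exact hyB ((hmemB y).mpr hxy)
            by_cases hyF : y ∈ F
            · have hddy : dd y = 4 := by simp only [hdd_def]; rw [if_pos hyF]
              have hxB : x ∉ B := by
                intro hB
                have hyNP : y ∈ NP := by
                  rw [hNP_def]
                  exact Finset.mem_biUnion.mpr
                    ⟨x, hB, Finset.mem_erase.mpr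
                      ⟨hyu, by rw [SimpleGraph.mem_neighborFinset]; exact hxy⟩⟩
                exact (hFchar y hyF).2.2.2.2 hyNP
              have hwx4 : (4 : ℤ) ≤ w x := hwge4 x hxu hxB
              rw [hwy, hddy]; linarith
            · have hddy : dd y = 0 := by simp only [hdd_def]; rw [if_neg hyF]
              have hwx2 : (2 : ℤ) ≤ w x := hwge2 x hxu
              rw [hwy, hddy]; linarith
  -- cardinalities
  have hAcard : A.card = 3 := by
    rw [hA_def]
    exact hcubic r
  have hBcard : B.card = 3 := by
    rw [hB_def]
    exact hcubic u
  have hNPcard : NP.card ≤ 6 := by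
    rw [hNP_def]
    calc (B.biUnion (fun s => (G.neighborFinset s).erase u)).card
        ≤ ∑ s ∈ B, ((G.neighborFinset s).erase u).card := Finset.card_biUnion_le
      _ ≤ ∑ _s ∈ B, 2 := by
          refine Finset.sum_le_sum fun s hs => ?_
          have hmem : u ∈ G.neighborFinset s := by
            rw [SimpleGraph.mem_neighborFinset]
            exact ((hmemB s).mp hs).symm
          rw [Finset.card_erase_of_mem hmem]
          have hdeg : (G.neighborFinset s).card = 3 := hcubic s
          omega
      _ = 6 := by rw [Finset.sum_const, hBcard]; rfl
  have hZcard : Z.card ≤ 13 := by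
    rw [hZ_def]
    have h1a := Finset.card_union_le (A ∪ B) NP
    have h1b := Finset.card_union_le A B
    have h2 := Finset.card_insert_le r (A ∪ B ∪ NP)
    omega
  have hu_notZ : u ∉ Z := by
    rw [hZ_def]
    simp only [Finset.mem_insert, Finset.mem_union]
    push_neg
    refine ⟨hne_ru.symm, ⟨huA, ?_⟩, ?_⟩
    · intro h; exact G.irrefl ((hmemB u).mp h)
    · rw [hNP_def]
      intro h
      obtain ⟨s, _, hmem⟩ := Finset.mem_biUnion.mp h
      exact (Finset.mem_erase.mp hmem).1 rfl
  have hcardZ1 : Z.card + 1 ≤ Fintype.card V := by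
    have h1 : (insert u Z).card = Z.card + 1 := Finset.card_insert_of_notMem hu_notZ
    have h2 : (insert u Z).card ≤ Fintype.card V := by
      rw [← Finset.card_univ]
      exact Finset.card_le_card (Finset.subset_univ _)
    omega
  have hFcard : F.card = Fintype.card V - (Z.card + 1) := by
    rw [hF_def, Finset.card_sdiff_of_subset (Finset.subset_univ _), Finset.card_univ,
      Finset.card_insert_of_notMem hu_notZ]
  -- the key construction
  have hkey : ∀ t : ℕ, t ≤ Fintype.card V + 1 →
      ∃ C : V → ℕ, (∑ x, C x) = t ∧ ¬ Solvable G C r := by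
    intro t ht
    obtain ⟨S, hSF, hScard⟩ := Finset.exists_subset_card_eq (min_le_right t F.card)
    set a := t - min t F.card with ha_def
    refine ⟨fun v => (if v = u then a else 0) + (if v ∈ S then 1 else 0), ?_, ?_⟩
    · rw [Finset.sum_add_distrib, Finset.sum_ite_eq' Finset.univ u (fun _ => a),
        if_pos (Finset.mem_univ u), Finset.sum_ite_mem, Finset.univ_inter,
        Finset.sum_const, smul_eq_mul, mul_one, hScard]
      omega
    · apply not_solvable_of_phi G w dd hd0 hdw hedge r
      rw [hwr, hddr]
      have ha15 : a ≤ 15 := by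
        rcases le_or_gt t F.card with h | h
        · have hmin : min t F.card = t := min_eq_left h
          omega
        · have hmin : min t F.card = F.card := min_eq_right h.le
          omega
      have hbound : ∀ v, phiF w dd v ((if v = u then a else 0) + (if v ∈ S then 1 else 0))
          ≤ (if v = u then (15 : ℤ) else 0) := by
        intro v
        by_cases hvu : v = u
        · have hnS : u ∉ S := fun h => hu_notF (hSF h)
          rw [hvu, if_pos rfl, if_pos rfl, if_neg hnS]
          unfold phiF
          rw [hwu, hddu]
          split_ifs <;> push_cast <;> omega
        · rw [if_neg hvu, if_neg hvu]
          by_cases hvS : v ∈ S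
          · rw [if_pos hvS]
            have hvF := hSF hvS
            unfold phiF
            rw [hwF v hvF]
            have hddv : dd v = 4 := by simp only [hdd_def]; rw [if_pos hvF]
            rw [hddv]
            norm_num
          · rw [if_neg hvS]
            unfold phiF
            norm_num
      calc phi w dd (fun v => (if v = u then a else 0) + (if v ∈ S then 1 else 0))
          = ∑ v, phiF w dd v ((if v = u then a else 0) + (if v ∈ S then 1 else 0)) := rfl
        _ ≤ ∑ v, (if v = u then (15 : ℤ) else 0) :=
            Finset.sum_le_sum fun v _ => hbound v
        _ = 15 := by
            rw [Finset.sum_ite_eq' Finset.univ u (fun _ => (15 : ℤ)),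
              if_pos (Finset.mem_univ u)]
        _ < 16 - 0 := by norm_num
  -- assembling
  have ht0 : (Fintype.card V * (2 ^ Fintype.card V - 1) + 1)
      ∈ {t | ∀ C : V → ℕ, ∑ x, C x = t → Solvable G C r} := by
    intro C hC
    exact exists_solvable_size hconn r C hC
  have hto : Fintype.card V + 2 ≤ pebblingNumberTo G r := by
    apply le_csInf ⟨_, ht0⟩
    intro t htm
    by_contra hlt
    push_neg at hlt
    obtain ⟨C, hC, hns⟩ := hkey t (by omega)
    exact hns (htm C hC)
  constructor
  · obtain ⟨C, hC, hns⟩ := hkey (Fintype.card V + 1) le_rfl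
    exact ⟨r, C, hC, hns⟩
  · exact le_trans hto (Finset.le_sup (Finset.mem_univ r))

end Pebbling
end

section
/- (Small Neighborhood Lemma) Let G be a finite simple connected graph, let u and v be vertices of G, and let a and b be non-negative integers such that N_a[u] ∩ N_b[v] = ∅. Define the configuration C* by C*(v) = 2^{a+b+1} − 1, C*(x) = 0 for all x ∈ (N_a[u] ∪ N_b[v]) \ {v}, and C*(x) = 1 for all other vertices x. Then C* is u-unsolvable; consequently π(G) ≥ π(G,u) > |C*|. -/
namespace Pebbling

variable {V : Type*}

/- ### Auxiliary lemmas -/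

section Aux

open scoped Classical

variable {G : SimpleGraph V}

lemma move_mono {C C' D : V → ℕ} (h : Move G C C') (hCD : ∀ x, C x ≤ D x) :
    ∃ D', Move G D D' ∧ ∀ x, C' x ≤ D' x := by
  obtain ⟨x, y, hadj, hx, rfl⟩ := h
  refine ⟨_, ⟨x, y, hadj, le_trans hx (hCD x), rfl⟩, ?_⟩
  intro z
  have hxy : x ≠ y := hadj.ne
  simp only [Function.update_apply]
  split_ifs with h1 h2
  · have := hCD y; omega
  · have := hCD x; omega
  · exact hCD z

lemma solvable_mono {C D : V → ℕ} {r : V}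
    (h : ∀ x, C x ≤ D x) : Solvable G C r → Solvable G D r := by
  rintro ⟨C', hsteps, hC'⟩
  suffices H : ∀ C C', Relation.ReflTransGen (Move G) C C' → ∀ D, (∀ x, C x ≤ D x) →
      ∃ D', Relation.ReflTransGen (Move G) D D' ∧ ∀ x, C' x ≤ D' x by
    obtain ⟨D', h1, h2⟩ := H _ _ hsteps D h
    exact ⟨D', h1, le_trans hC' (h2 r)⟩
  intro C C' hsteps
  induction hsteps with
  | refl => exact fun D hD => ⟨D, .refl, hD⟩
  | tail _ hstep ih =>
    intro D hD
    obtain ⟨D1, hD1, hle1⟩ := ih D hD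
    obtain ⟨D2, hstep2, hle2⟩ := move_mono hstep hle1
    exact ⟨D2, hD1.tail hstep2, hle2⟩

lemma transfer {x y : V} (hadj : G.Adj x y) (C : V → ℕ) :
    ∀ m : ℕ, 2 * m ≤ C x →
      Relation.ReflTransGen (Move G) C
        (fun z => if z = y then C y + m else if z = x then C x - 2 * m else C z) := by
  have hxy : x ≠ y := hadj.ne
  intro m
  induction m with
  | zero =>
    intro _
    convert Relation.ReflTransGen.refl using 1
    funext z
    split_ifs with h1 h2 <;> simp_all
  | succ m ih =>
    intro hm
    refine (ih (by omega)).tail ?_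
    refine ⟨x, y, hadj, ?_, ?_⟩
    · have h2 : (fun z => if z = y then C y + m else if z = x then C x - 2 * m else C z) x
          = C x - 2 * m := by simp [hxy]
      rw [h2]
      omega
    · funext z
      simp only [Function.update_apply]
      split_ifs <;> simp_all <;> omega

lemma solvable_of_big (hconn : G.Connected) (r : V) :
    ∀ (k : ℕ) (C : V → ℕ) (x : V), G.dist x r ≤ k → 2 ^ k ≤ C x → Solvable G C r := by
  intro k
  induction k with
  | zero =>
    intro C x hd hC
    have hx : x = r := (hconn.dist_eq_zero_iff).mp (Nat.le_zero.mp hd)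
    subst hx
    exact ⟨C, .refl, by simpa using hC⟩
  | succ k ih =>
    intro C x hd hC
    by_cases hxr : x = r
    · subst hxr
      exact ⟨C, .refl, le_trans (Nat.one_le_two_pow) hC⟩
    · obtain ⟨p, hp⟩ := (hconn x r).exists_walk_length_eq_dist
      cases p with
      | nil => exact absurd rfl hxr
      | @cons _ y _ hadj q =>
        have hq := SimpleGraph.dist_le q
        simp only [SimpleGraph.Walk.length_cons] at hp
        have hdy : G.dist y r ≤ k := by omega
        have hle : 2 * 2 ^ k ≤ C x := by
          rw [pow_succ] at hC; omega
        have ht := transfer hadj C (2 ^ k) hle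
        obtain ⟨C', hC', hr⟩ := ih
          (fun z => if z = y then C y + 2 ^ k else if z = x then C x - 2 * 2 ^ k else C z)
          y hdy (by simp)
        exact ⟨C', ht.trans hC', hr⟩

lemma exists_config_le [Fintype V] (f : V → ℕ) :
    ∀ t, t ≤ ∑ x, f x → ∃ g : V → ℕ, (∀ x, g x ≤ f x) ∧ ∑ x, g x = t := by
  intro t
  induction t with
  | zero => exact fun _ => ⟨fun _ => 0, fun _ => Nat.zero_le _, by simp⟩
  | succ t ih =>
    intro ht
    obtain ⟨g, hg, hsum⟩ := ih (by omega)
    have hex : ∃ x, g x < f x := by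
      by_contra h
      push_neg at h
      have := Finset.sum_le_sum (fun x (_ : x ∈ Finset.univ) => h x)
      omega
    obtain ⟨x, hx⟩ := hex
    refine ⟨Function.update g x (g x + 1), ?_, ?_⟩
    · intro z
      rcases eq_or_ne z x with rfl | hz
      · simpa using hx
      · simp [Function.update_apply, hz, hg z]
    · rw [Finset.sum_update_of_mem (Finset.mem_univ x)]
      have h2 := Finset.sum_eq_sum_sdiff_singleton_add (Finset.mem_univ x) g
      omega

lemma sum_split [Fintype V] (F : V → ℕ) (x y : V) (hxy : x ≠ y) :
    ∑ z, F z = F x + F y + ∑ z ∈ (Finset.univ.erase x).erase y, F z := by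
  rw [← Finset.add_sum_erase _ F (Finset.mem_univ x)]
  rw [← Finset.add_sum_erase _ F (Finset.mem_erase.mpr ⟨hxy.symm, Finset.mem_univ y⟩)]
  ring

lemma pow_le_aux {p q : ℕ} (h : p ≤ q + 1) : 2 ^ p ≤ 2 ^ q + 2 ^ q := by
  calc 2 ^ p ≤ 2 ^ (q + 1) := Nat.pow_le_pow_right (by norm_num) h
  _ = 2 ^ q + 2 ^ q := by rw [pow_succ, Nat.mul_two]

lemma pow_le_aux' {p q : ℕ} (h : p ≤ q) : 2 ^ p ≤ 2 ^ q + 0 := by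
  simpa using Nat.pow_le_pow_right (by norm_num) h

end Aux

open scoped Classical in
/-- Small Neighborhood Lemma: if the balls N_a[u] and N_b[v] are
disjoint, then the configuration C* (with 2^(a+b+1) − 1 pebbles on v, no pebbles
elsewhere on N_a[u] ∪ N_b[v], and one pebble on every other vertex) is
u-unsolvable; consequently π(G) ≥ π(G,u) > |C*|. -/
theorem small_neighborhood_lemma
    {V : Type*} [Fintype V] (G : SimpleGraph V)
    (hconn : G.Connected) (u v : V) (a b : ℕ)
    (hdisj : {x | G.dist u x ≤ a} ∩ {x | G.dist v x ≤ b} = ∅) :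
    letI Cstar : V → ℕ := fun x =>
      if x = v then 2 ^ (a + b + 1) - 1
      else if G.dist u x ≤ a ∨ G.dist v x ≤ b then 0
      else 1
    ¬ Solvable G Cstar u ∧
      (∑ x, Cstar x) < pebblingNumberTo G u ∧
      pebblingNumberTo G u ≤ pebblingNumber G := by
  set s : ℕ := a + b + 1 with hs
  set Cstar : V → ℕ := fun x =>
    if x = v then 2 ^ s - 1
    else if G.dist u x ≤ a ∨ G.dist v x ≤ b then 0
    else 1 with hCstar
  have hdisj' : ∀ x : V, ¬ (G.dist u x ≤ a) ∨ ¬ (G.dist v x ≤ b) := by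
    intro x
    by_contra h
    push_neg at h
    have hx : x ∈ ({x | G.dist u x ≤ a} ∩ {x | G.dist v x ≤ b} : Set V) := ⟨h.1, h.2⟩
    rw [hdisj] at hx
    exact hx
  -- weight functions
  set w : V → ℕ := fun x =>
    if G.dist u x ≤ a then 2 ^ (s - G.dist u x)
    else if G.dist v x ≤ b then 2 ^ (G.dist v x) else 2 ^ (b + 1) with hw
  set w' : V → ℕ := fun x =>
    if G.dist u x ≤ a then 2 ^ (s - G.dist u x)
    else if G.dist v x ≤ b then 2 ^ (G.dist v x) else 0 with hw'
  have hww' : ∀ x, w' x ≤ w x := by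
    intro x
    simp only [hw, hw']
    split_ifs <;> simp
  have hkey : ∀ x y : V, G.Adj x y → w y ≤ w x + w' x := by
    intro x y hadj
    have hdxy : G.dist x y = 1 := SimpleGraph.dist_eq_one_iff_adj.mpr hadj
    have hdyx : G.dist y x = 1 := by rw [SimpleGraph.dist_comm]; exact hdxy
    have t1 := hconn.dist_triangle (u := u) (v := x) (w := y)
    have t2 := hconn.dist_triangle (u := u) (v := y) (w := x)
    have t3 := hconn.dist_triangle (u := v) (v := x) (w := y)
    have t4 := hconn.dist_triangle (u := v) (v := y) (w := x)
    rw [hdxy] at t1 t3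
    rw [hdyx] at t2 t4
    have hy := hdisj' y
    have hx := hdisj' x
    simp only [hw, hw']
    split_ifs <;>
      first
      | (apply pow_le_aux; omega)
      | (apply pow_le_aux'; omega)
  -- potential function
  set g : ℕ → V → ℕ := fun k x => if k = 0 then 0 else (k - 1) * w x + w' x with hg
  have g_zero : ∀ x : V, g 0 x = 0 := by
    intro x; simp [hg]
  have g_val : ∀ (m : ℕ) (x : V), g (m + 1) x = m * w x + w' x := by
    intro m x; simp [hg]
  have g_succ : ∀ (k : ℕ) (x : V), g (k + 1) x ≤ g k x + w x := by
    intro k x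
    cases k with
    | zero =>
      rw [g_zero, g_val]
      have := hww' x
      omega
    | succ m =>
      rw [g_val, g_val]
      have h2 : (m + 1) * w x = m * w x + w x := by ring
      omega
  have g_drop : ∀ (k : ℕ) (x : V), 2 ≤ k → g (k - 2) x + w x + w' x ≤ g k x := by
    intro k x hk
    match k, hk with
    | 2, _ =>
      have h1 : (2 : ℕ) - 2 = 0 := rfl
      have h2 := g_val 1 x
      norm_num at h2
      rw [h1, g_zero, h2]
      omega
    | (m + 3), _ =>
      have h1 : m + 3 - 2 = m + 1 := by omega
      have h2 := g_val (m + 2) x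
      norm_num at h2
      rw [h1, g_val, h2]
      have h3 : (m + 2) * w x = m * w x + w x + w x := by ring
      have := hww' x
      omega
  set Φ : (V → ℕ) → ℕ := fun C => ∑ x, g (C x) x with hΦ
  have hmove : ∀ C C', Move G C C' → Φ C' ≤ Φ C := by
    rintro C C' ⟨x, y, hadj, hx2, rfl⟩
    have hxy : x ≠ y := hadj.ne
    set C' : V → ℕ := Function.update (Function.update C x (C x - 2)) y (C y + 1) with hC'
    have hC'x : C' x = C x - 2 := by simp [hC', Function.update_apply, hxy]
    have hC'y : C' y = C y + 1 := by simp [hC', Function.update_apply]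
    have hC'z : ∀ z, z ≠ x → z ≠ y → C' z = C z := by
      intro z h1 h2
      simp [hC', Function.update_apply, h1, h2]
    have e1 : Φ C' = g (C' x) x + g (C' y) y + ∑ z ∈ (Finset.univ.erase x).erase y, g (C' z) z :=
      sum_split _ x y hxy
    have e2 : Φ C = g (C x) x + g (C y) y + ∑ z ∈ (Finset.univ.erase x).erase y, g (C z) z :=
      sum_split _ x y hxy
    have e3 : ∑ z ∈ (Finset.univ.erase x).erase y, g (C' z) z
        = ∑ z ∈ (Finset.univ.erase x).erase y, g (C z) z := by
      apply Finset.sum_congr rfl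
      intro z hz
      simp only [Finset.mem_erase] at hz
      rw [hC'z z hz.2.1 hz.1]
    have hl1 := g_succ (C y) y
    have hl2 := g_drop (C x) x hx2
    have hl3 := hkey x y hadj
    rw [e1, e2, e3, hC'x, hC'y]
    omega
  have hmono : ∀ C C', Relation.ReflTransGen (Move G) C C' → Φ C' ≤ Φ C := by
    intro C C' h
    induction h with
    | refl => exact le_rfl
    | tail _ hstep ih => exact le_trans (hmove _ _ hstep) ih
  -- value of Φ on Cstar
  have hduv : ¬ G.dist u v ≤ a := by
    rcases hdisj' v with h | h
    · exact h
    · exact absurd (by simp [SimpleGraph.dist_self]) h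
  have hwv : w v = 1 := by
    simp [hw, hduv, SimpleGraph.dist_self]
  have hw'v : w' v = 1 := by
    simp [hw', hduv, SimpleGraph.dist_self]
  have h2s : 2 ≤ 2 ^ s := by
    calc 2 = 2 ^ 1 := (pow_one 2).symm
    _ ≤ 2 ^ s := Nat.pow_le_pow_right (by norm_num) (by omega)
  have hΦstar : Φ Cstar = 2 ^ s - 1 := by
    show (∑ x, g (Cstar x) x) = 2 ^ s - 1
    rw [Finset.sum_eq_single v]
    · have h1 : Cstar v = (2 ^ s - 2) + 1 := by
        have h0 : Cstar v = 2 ^ s - 1 := by simp [hCstar]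
        omega
      rw [h1, g_val, hwv, hw'v]
      omega
    · intro z _ hzv
      have h1 : Cstar z = if G.dist u z ≤ a ∨ G.dist v z ≤ b then 0 else 1 := by
        simp [hCstar, hzv]
      by_cases h2 : G.dist u z ≤ a ∨ G.dist v z ≤ b
      · rw [h1, if_pos h2, g_zero]
      · push_neg at h2
        have hz0 : w' z = 0 := by
          simp [hw', not_le.mpr h2.1, not_le.mpr h2.2]
        have h3 := g_val 0 z
        norm_num at h3
        rw [h1, if_neg (by push_neg; exact h2), h3, hz0]
    · intro h
      exact absurd (Finset.mem_univ v) h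
  have hunsolv : ¬ Solvable G Cstar u := by
    rintro ⟨C', hsteps, hC'⟩
    have h1 : Φ C' ≤ 2 ^ s - 1 := hΦstar ▸ hmono _ _ hsteps
    have h2 : g (C' u) u ≤ Φ C' := by
      show g (C' u) u ≤ ∑ z, g (C' z) z
      exact Finset.single_le_sum (f := fun z => g (C' z) z)
        (fun z _ => Nat.zero_le _) (Finset.mem_univ u)
    have hw'u : w' u = 2 ^ s := by
      simp [hw', SimpleGraph.dist_self]
    have h3 : 2 ^ s ≤ g (C' u) u := by
      obtain ⟨m, hm⟩ : ∃ m, C' u = m + 1 := ⟨C' u - 1, by omega⟩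
      rw [hm, g_val, hw'u]
      omega
    omega
  refine ⟨hunsolv, ?_, Finset.le_sup (f := fun r => pebblingNumberTo G r) (Finset.mem_univ u)⟩
  -- the defining set is nonempty
  have hSne : {t | ∀ C : V → ℕ, ∑ x, C x = t → Solvable G C u}.Nonempty := by
    set K : ℕ := Finset.univ.sup (fun x => G.dist x u) with hK
    refine ⟨Fintype.card V * (2 ^ K - 1) + 1, ?_⟩
    intro C hC
    have hex : ∃ x, 2 ^ K ≤ C x := by
      by_contra h
      push_neg at h
      have h1 : ∑ x, C x ≤ ∑ _x : V, (2 ^ K - 1) :=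
        Finset.sum_le_sum (fun x _ => by have := h x; omega)
      have h2 : ∑ _x : V, (2 ^ K - 1) = Fintype.card V * (2 ^ K - 1) := by
        simp [Finset.sum_const, Finset.card_univ, Nat.smul_one_eq_cast]
      omega
    obtain ⟨x, hx⟩ := hex
    exact solvable_of_big hconn u K C x
      (Finset.le_sup (f := fun x => G.dist x u) (Finset.mem_univ x)) hx
  have hmem : pebblingNumberTo G u ∈
      {t | ∀ C : V → ℕ, ∑ x, C x = t → Solvable G C u} := Nat.sInf_mem hSne
  by_contra hle
  push_neg at hle
  obtain ⟨D, hD, hDsum⟩ := exists_config_le Cstar (pebblingNumberTo G u) hle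
  exact hunsolv (solvable_mono hD (hmem D hDsum))

end Pebbling
end

section
/- (Retract Lemma) Let G be a finite simple connected graph and let H be a connected subgraph of G that is a retract of G, i.e., there is a map φ : V(G) → V(H) with φ(w) = w for every vertex w of H and such that φ(u)φ(v) is an edge of H whenever uv is an edge of G. Then π(H) ≤ π(G). -/
namespace Pebbling

variable {V : Type*}

open scoped Classical

/-- Transfer `m` pebbles along an edge, spending `2*m`. -/
lemma transfer_s6 (G : SimpleGraph V) {v u : V} (h : G.Adj v u) (m : ℕ) :
    ∀ C : V → ℕ, 2 * m ≤ C v →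
      Relation.ReflTransGen (Move G)
        C (Function.update (Function.update C v (C v - 2 * m)) u (C u + m)) := by
  induction m with
  | zero =>
    intro C _
    simp only [Nat.mul_zero, Nat.sub_zero, Nat.add_zero, Function.update_eq_self]
    exact Relation.ReflTransGen.refl
  | succ m ih =>
    intro C hC
    have hvu : v ≠ u := h.ne
    have h2 : 2 ≤ C v := le_trans (by omega) hC
    set C1 := Function.update (Function.update C v (C v - 2)) u (C u + 1) with hC1
    have hstep : Move G C C1 := ⟨v, u, h, h2, rfl⟩
    have hC1v : C1 v = C v - 2 := by
      simp [hC1, Function.update_apply, hvu]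
    have hC1u : C1 u = C u + 1 := by simp [hC1]
    have hle : 2 * m ≤ C1 v := by omega
    have := ih C1 hle
    have heq : Function.update (Function.update C1 v (C1 v - 2 * m)) u (C1 u + m)
        = Function.update (Function.update C v (C v - 2 * (m + 1))) u (C u + (m + 1)) := by
      funext x
      rcases eq_or_ne x u with rfl | hxu
      · simp [hC1u]; omega
      · rcases eq_or_ne x v with rfl | hxv
        · simp [Function.update_apply, hxu, hC1v]; omega
        · simp [hC1, Function.update_apply, hxu, hxv]
    exact Relation.ReflTransGen.head hstep (heq ▸ this)

lemma solvable_of_pow_dist (G : SimpleGraph V) (hG : G.Connected) (r : V) :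
    ∀ d : ℕ, ∀ v : V, ∀ C : V → ℕ, G.dist v r ≤ d → 2 ^ d ≤ C v → Solvable G C r := by
  intro d
  induction d with
  | zero =>
    intro v C hd hc
    have hv : v = r := (hG.dist_eq_zero_iff).mp (Nat.le_zero.mp hd)
    subst hv
    exact ⟨C, Relation.ReflTransGen.refl, by simpa using hc⟩
  | succ d ih =>
    intro v C hd hc
    rcases Nat.lt_or_ge (G.dist v r) (d + 1) with hlt | hge
    · exact ih v C (by omega) (le_trans (Nat.pow_le_pow_right (by norm_num) (by omega)) hc)
    · have hdist : G.dist v r = d + 1 := le_antisymm hd hge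
      obtain ⟨p, hp⟩ := hG.exists_walk_length_eq_dist v r
      rw [hdist] at hp
      cases p with
      | nil => simp at hp
      | cons hadj q =>
        rename_i u
        have hq : G.dist u r ≤ d := by
          have := SimpleGraph.dist_le q
          simp at hp
          omega
        have htr := transfer_s6 G hadj (2 ^ d) C (by rw [← pow_succ']; exact hc)
        set C2 := Function.update (Function.update C v (C v - 2 * 2 ^ d)) u (C u + 2 ^ d)
          with hC2
        have hC2u : 2 ^ d ≤ C2 u := by simp [hC2]
        obtain ⟨C', hC', hr'⟩ := ih u C2 hq hC2u
        exact ⟨C', htr.trans hC', hr'⟩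

/-- For a connected graph, the set defining the pebbling number is nonempty. -/
lemma solvable_set_nonempty [Fintype V] (G : SimpleGraph V) (hG : G.Connected) (r : V) :
    {t | ∀ C : V → ℕ, ∑ x, C x = t → Solvable G C r}.Nonempty := by
  refine ⟨1 + ∑ v : V, (2 ^ (G.dist v r) - 1), fun C hC => ?_⟩
  by_contra hns
  have hall : ∀ v : V, C v ≤ 2 ^ (G.dist v r) - 1 := by
    intro v
    by_contra hv
    exact hns (solvable_of_pow_dist G hG r (G.dist v r) v C le_rfl
      (by have := Nat.one_le_two_pow (n := G.dist v r); omega))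
  have : ∑ x, C x ≤ ∑ v : V, (2 ^ (G.dist v r) - 1) := Finset.sum_le_sum fun v _ => hall v
  omega


/-- Pushforward of a configuration along a map. -/
noncomputable def push {W : Type*} [Fintype V] (f : V → W) (C : V → ℕ) : W → ℕ :=
  fun w => ∑ v : V, if f v = w then C v else 0

lemma le_push {W : Type*} [Fintype V] (f : V → W) (C : V → ℕ) (u : V) :
    C u ≤ push f C (f u) := by
  unfold push
  calc C u = if f u = f u then C u else 0 := by rw [if_pos rfl]
    _ ≤ _ := Finset.single_le_sum (f := fun v => if f v = f u then C v else 0)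
      (fun i _ => Nat.zero_le _) (Finset.mem_univ u)

lemma push_move {W : Type*} [Fintype V] (G : SimpleGraph V) (Hg : SimpleGraph W)
    (f : V → W) (hf : ∀ x y, G.Adj x y → Hg.Adj (f x) (f y))
    {C C' : V → ℕ} (h : Move G C C') : Move Hg (push f C) (push f C') := by
  obtain ⟨u, w, hadj, h2, rfl⟩ := h
  have huw : u ≠ w := hadj.ne
  have hfa := hf u w hadj
  have hfuw : f u ≠ f w := hfa.ne
  set g : V → ℕ := Function.update (Function.update C u (C u - 2)) w (C w + 1) with hg
  have hgw : g w = C w + 1 := by simp [hg]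
  have hgu : g u = C u - 2 := by
    simp [hg, Function.update_apply, huw]
  have hgo : ∀ v, v ≠ u → v ≠ w → g v = C v := by
    intro v h1 h2
    simp [hg, Function.update_apply, h1, h2]
  refine ⟨f u, f w, hfa, le_trans h2 (le_push f C u), ?_⟩
  funext x
  rcases eq_or_ne x (f w) with rfl | hxw
  · rw [Function.update_self]
    unfold push
    have hterm : ∀ v : V, (if f v = f w then g v else 0)
        = (if f v = f w then C v else 0) + (if v = w then 1 else 0) := by
      intro v
      rcases eq_or_ne v w with rfl | hvw
      · rw [if_pos rfl, if_pos rfl, if_pos rfl, hgw]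
      · rw [if_neg hvw]
        rcases Classical.em (f v = f w) with hfv | hfv
        · have hvu : v ≠ u := by intro h; subst h; exact hfuw hfv
          rw [if_pos hfv, if_pos hfv, hgo v hvu hvw, Nat.add_zero]
        · rw [if_neg hfv, if_neg hfv, Nat.add_zero]
    rw [Finset.sum_congr rfl fun v _ => hterm v, Finset.sum_add_distrib]
    congr 1
    simp
  · rcases eq_or_ne x (f u) with rfl | hxu
    · rw [Function.update_of_ne hxw, Function.update_self]
      unfold push
      have hterm : ∀ v : V, (if f v = f u then C v else 0)
          = (if f v = f u then g v else 0) + (if v = u then 2 else 0) := by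
        intro v
        rcases eq_or_ne v u with rfl | hvu
        · rw [if_pos rfl, if_pos rfl, if_pos rfl, hgu]
          omega
        · rw [if_neg hvu]
          rcases Classical.em (f v = f u) with hfv | hfv
          · have hvw : v ≠ w := by intro h; subst h; exact hfuw hfv.symm
            rw [if_pos hfv, if_pos hfv, hgo v hvu hvw, Nat.add_zero]
          · rw [if_neg hfv, if_neg hfv, Nat.add_zero]
      have hsum : (∑ v : V, if f v = f u then C v else 0)
          = (∑ v : V, if f v = f u then g v else 0) + 2 := by
        rw [Finset.sum_congr rfl fun v _ => hterm v, Finset.sum_add_distrib]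
        congr 1
        simp
      omega
    · rw [Function.update_of_ne hxw, Function.update_of_ne hxu]
      unfold push
      refine Finset.sum_congr rfl fun v _ => ?_
      rcases Classical.em (f v = x) with hfv | hfv
      · have hvu : v ≠ u := by intro h; subst h; exact hxu hfv.symm
        have hvw : v ≠ w := by intro h; subst h; exact hxw hfv.symm
        rw [if_pos hfv, if_pos hfv, hgo v hvu hvw]
      · rw [if_neg hfv, if_neg hfv]

lemma push_eq {W : Type*} [Fintype V] (f : V → W) (C : V → ℕ) (u : V) (w : W)
    (h1 : f u = w) (h2 : ∀ v, v ≠ u → f v = w → C v = 0) : push f C w = C u := by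
  unfold push
  rw [Finset.sum_eq_single u]
  · rw [if_pos h1]
  · intro b _ hb
    rcases Classical.em (f b = w) with h | h
    · rw [if_pos h, h2 b hb h]
    · rw [if_neg h]
  · intro h
    exact absurd (Finset.mem_univ u) h

lemma sum_push {W : Type*} [Fintype V] [Fintype W] (f : V → W) (C : V → ℕ) :
    ∑ w : W, push f C w = ∑ v : V, C v := by
  unfold push
  rw [Finset.sum_comm]
  refine Finset.sum_congr rfl fun v _ => ?_
  simp

/-- Retract Lemma: if the connected subgraph H of G is a retract of G
(via a map φ fixing the vertices of H and sending every edge of G to an edge of H),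
then π(H) ≤ π(G). -/
theorem retract_lemma
    {V : Type*} [Fintype V] (G : SimpleGraph V) (hG : G.Connected)
    (H : G.Subgraph) [Fintype H.verts] (hH : H.coe.Connected)
    (φ : V → H.verts)
    (hfix : ∀ w : H.verts, φ (w : V) = w)
    (hhom : ∀ x y : V, G.Adj x y → H.coe.Adj (φ x) (φ y)) :
    pebblingNumber H.coe ≤ pebblingNumber G := by
  unfold pebblingNumber
  refine Finset.sup_le fun r _ => ?_
  refine le_trans ?_ (Finset.le_sup (f := fun r => pebblingNumberTo G r)
    (Finset.mem_univ (r : V)))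
  unfold pebblingNumberTo
  set SG := {t | ∀ C : V → ℕ, ∑ x, C x = t → Solvable G C (r : V)} with hSG
  have hne : SG.Nonempty := solvable_set_nonempty G hG (r : V)
  have hmem : sInf SG ∈ SG := Nat.sInf_mem hne
  refine Nat.sInf_le ?_
  intro D hD
  set C : V → ℕ := fun v => if h : v ∈ H.verts then D ⟨v, h⟩ else 0 with hCdef
  have hpushC : push φ C = D := by
    funext w
    rw [push_eq φ C (↑w : V) w (hfix w)]
    · simp [hCdef, w.2]
    · intro v hvw hφ
      rcases Classical.em (v ∈ H.verts) with hvH | hvH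
      · exfalso
        have h1 : φ v = (⟨v, hvH⟩ : H.verts) := hfix ⟨v, hvH⟩
        rw [h1] at hφ
        exact hvw (congrArg Subtype.val hφ)
      · simp [hCdef, hvH]
  have hsize : ∑ x, C x = ∑ w : H.verts, D w := by
    rw [← hpushC, sum_push]
  have hsolv : Solvable G C (r : V) := hmem C (by rw [hsize, hD])
  obtain ⟨C', hRTG, hr'⟩ := hsolv
  refine ⟨push φ C', ?_, ?_⟩
  · rw [← hpushC]
    exact Relation.ReflTransGen.lift (push φ)
      (fun a b h => push_move G H.coe φ hhom h) _ _ hRTG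
  · calc 1 ≤ C' (r : V) := hr'
      _ ≤ push φ C' (φ (↑r : V)) := le_push φ C' (↑r : V)
      _ = push φ C' r := by rw [hfix r]

end Pebbling
end

section
/- (Weight Function Lemma) Let G be a finite simple connected graph, r a vertex of G, and T a subtree of G containing r with at least two vertices, rooted at r; for a non-root vertex v of T let v⁺ denote its parent in T (the T-neighbor of v one step closer to r). Let w : V(G) → ℚ≥0 satisfy w(r) = 0, w(v) = 0 for every vertex v not in T, and w(v⁺) ≥ 2·w(v) for every vertex v of T other than r whose parent is not r. If C is an r-unsolvable configuration on G, then Σ_{v ∈ V(G)} w(v)·C(v) ≤ Σ_{v ∈ V(T)} w(v). -/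
namespace Pebbling

variable {V : Type*}

open scoped Classical in
lemma sum_update_update {V : Type*} [Fintype V] {M : Type*} [AddCommMonoid M]
    (φ : V → ℕ → M) (C : V → ℕ) {u t : V} (hne : u ≠ t) (a b : ℕ) :
    ∑ x, φ x (Function.update (Function.update C u a) t b x) + (φ u (C u) + φ t (C t))
      = ∑ x, φ x (C x) + (φ u a + φ t b) := by
  have h1 : ∀ g : V → M,
      ∑ x, g x = ∑ x ∈ (Finset.univ.erase t).erase u, g x + g u + g t := by
    intro g
    rw [Finset.sum_erase_add _ _ (Finset.mem_erase.mpr ⟨hne, Finset.mem_univ u⟩),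
      Finset.sum_erase_add _ _ (Finset.mem_univ t)]
  rw [h1 (fun x => φ x (Function.update (Function.update C u a) t b x)),
    h1 (fun x => φ x (C x))]
  have h2 : ∀ x ∈ (Finset.univ.erase t).erase u,
      φ x (Function.update (Function.update C u a) t b x) = φ x (C x) := by
    intro x hx
    have hxu : x ≠ u := (Finset.mem_erase.mp hx).1
    have hxt : x ≠ t := (Finset.mem_erase.mp (Finset.mem_erase.mp hx).2).1
    rw [Function.update_of_ne hxt, Function.update_of_ne hxu]
  rw [Finset.sum_congr rfl h2, Function.update_of_ne hne, Function.update_self,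
    Function.update_self]
  abel

open scoped Classical in
lemma unsolvable_of_move {V : Type*} {G : SimpleGraph V} {C C' : V → ℕ} {r : V}
    (hm : Move G C C') (hC : ¬ Solvable G C r) : ¬ Solvable G C' r := by
  rintro ⟨D, hD, hDr⟩
  exact hC ⟨D, hD.head hm, hDr⟩

open scoped Classical in
/-- Weight Function Lemma: let T be a subtree of G containing r with
at least two vertices, rooted at r, with parent map p (the T-neighbor one step
closer to r).  If w vanishes at r and off T, and w(v⁺) ≥ 2·w(v) for every
non-root vertex v of T whose parent is not r, then every r-unsolvable
configuration C satisfies Σ_v w(v)·C(v) ≤ Σ_{v ∈ V(T)} w(v). -/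
theorem weight_function_lemma
    {V : Type*} [Fintype V] (G : SimpleGraph V)
    (hconn : G.Connected) (r : V)
    (T : G.Subgraph) (hr : r ∈ T.verts) (hT2 : 2 ≤ T.verts.ncard)
    (htree : T.coe.IsTree)
    (p : T.verts → T.verts)
    (hparent : ∀ x : T.verts, (x : V) ≠ r →
      T.coe.Adj x (p x) ∧ T.coe.dist (p x) ⟨r, hr⟩ + 1 = T.coe.dist x ⟨r, hr⟩)
    (w : V → ℚ)
    (hw0 : ∀ x, 0 ≤ w x)
    (hwr : w r = 0)
    (hwout : ∀ x, x ∉ T.verts → w x = 0)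
    (hwp : ∀ x : T.verts, (x : V) ≠ r → ((p x : V) ≠ r) → 2 * w x ≤ w (p x))
    (C : V → ℕ) (hC : ¬ Solvable G C r) :
    ∑ x, w x * (C x : ℚ) ≤ ∑ x ∈ T.verts.toFinset, w x := by
  classical
  suffices h : ∀ n (C : V → ℕ), ∑ x, C x = n → ¬ Solvable G C r →
      ∑ x, w x * (C x : ℚ) ≤ ∑ x ∈ T.verts.toFinset, w x by
    exact h (∑ x, C x) C rfl hC
  clear hC C
  intro n
  induction n using Nat.strong_induction_on with
  | _ n IH =>
    intro C hsum hC
    by_cases hbase : ∀ v ∈ T.verts, v ≠ r → C v ≤ 1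
    · -- base case: at most one pebble on each non-root vertex of T
      have h1 : ∑ x, w x * (C x : ℚ) = ∑ x ∈ T.verts.toFinset, w x * (C x : ℚ) := by
        refine (Finset.sum_subset (Finset.subset_univ _) ?_).symm
        intro x _ hx
        rw [hwout x (by simpa using hx), zero_mul]
      rw [h1]
      refine Finset.sum_le_sum ?_
      intro x hx
      have hxT : x ∈ T.verts := by simpa using hx
      by_cases hxr : x = r
      · subst hxr; rw [hwr, zero_mul]
      · have hCx : (C x : ℚ) ≤ 1 := by exact_mod_cast hbase x hxT hxr
        calc w x * (C x : ℚ) ≤ w x * 1 := by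
              exact mul_le_mul_of_nonneg_left hCx (hw0 x)
          _ = w x := mul_one _
    · -- inductive step: some non-root vertex of T has at least two pebbles
      push_neg at hbase
      obtain ⟨v, hv, hvr, hCv1⟩ := hbase
      have hCv : 2 ≤ C v := hCv1
      set x : T.verts := ⟨v, hv⟩ with hxdef
      have hadj : T.coe.Adj x (p x) := (hparent x hvr).1
      have hgadj : G.Adj v ((p x : V)) := T.adj_sub hadj
      have hvp : v ≠ (p x : V) := G.ne_of_adj hgadj
      by_cases hpr : ((p x : V)) = r
      · -- a move from v to r solves C, contradiction
        exfalso
        apply hC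
        refine ⟨Function.update (Function.update C v (C v - 2)) r (C r + 1),
          Relation.ReflTransGen.single ⟨v, r, ?_, hCv, rfl⟩, ?_⟩
        · rw [← hpr]; exact hgadj
        · rw [Function.update_self]; omega
      · -- make a pebbling move from v to p x
        set C' := Function.update (Function.update C v (C v - 2)) ((p x : V)) (C (p x) + 1)
          with hC'def
        have hmove : Move G C C' := ⟨v, (p x : V), hgadj, hCv, rfl⟩
        have hC'uns : ¬ Solvable G C' r := unsolvable_of_move hmove hC
        -- the new configuration has one fewer pebble
        have hsumN := sum_update_update (fun _ m => m) C hvp (C v - 2) (C ((p x : V)) + 1)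
        have hn2 : 2 ≤ n := by
          have : C v ≤ ∑ y, C y := Finset.single_le_sum (fun i _ => Nat.zero_le _)
            (Finset.mem_univ v)
          omega
        have hsum' : ∑ y, C' y = n - 1 := by
          simp only [hC'def]
          omega
        have hIH := IH (n - 1) (by omega) C' hsum' hC'uns
        -- relate the weighted sums
        have hsumW := sum_update_update (fun y m => w y * (m : ℚ)) C hvp
          (C v - 2) (C ((p x : V)) + 1)
        have hcast : ((C v - 2 : ℕ) : ℚ) = (C v : ℚ) - 2 := by
          have := hCv; push_cast [Nat.cast_sub this]; ring
        rw [hcast] at hsumW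
        push_cast at hsumW
        have hwineq : 2 * w v ≤ w ((p x : V)) := hwp x hvr hpr
        have hwv : 0 ≤ w v := hw0 v
        have : ∑ y, w y * (C y : ℚ) ≤ ∑ y, w y * (C' y : ℚ) := by
          simp only [hC'def] at *
          nlinarith [hsumW]
        linarith [hIH]

end Pebbling
end

section
/- For every integer k ≥ 1, with m = 2k+1, the Flower snark J_m has diameter k + 2. -/
namespace Pebbling

variable {V : Type*}

/-- Generating relation for the Flower snark J_m, m = 2k+1.  A vertex `(t, i)`
is `v_i, x_i, y_i, z_i` for `t = 0, 1, 2, 3` respectively. -/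
def flowerRel (k : ℕ) : Fin 4 × ZMod (2 * k + 1) → Fin 4 × ZMod (2 * k + 1) → Prop :=
  fun p q =>
    (p.1 = 3 ∧ q.1 ≠ 3 ∧ p.2 = q.2) ∨
    (p.1 = 0 ∧ q.1 = 0 ∧ q.2 = p.2 + 1) ∨
    (p.1 = 1 ∧ q.1 = 1 ∧ q.2 = p.2 + 1 ∧ p.2 ≠ (k : ZMod (2 * k + 1))) ∨
    (p.1 = 2 ∧ q.1 = 2 ∧ q.2 = p.2 + 1 ∧ p.2 ≠ (k : ZMod (2 * k + 1))) ∨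
    (p.1 = 1 ∧ q.1 = 2 ∧ p.2 = (k : ZMod (2 * k + 1)) ∧ q.2 = (k : ZMod (2 * k + 1)) + 1) ∨
    (p.1 = 2 ∧ q.1 = 1 ∧ p.2 = (k : ZMod (2 * k + 1)) ∧ q.2 = (k : ZMod (2 * k + 1)) + 1)

/-- The Flower snark J_m on 4m vertices, m = 2k+1. -/
def flowerSnark (k : ℕ) : SimpleGraph (Fin 4 × ZMod (2 * k + 1)) :=
  SimpleGraph.fromRel (flowerRel k)

section FlowerAux

variable (k : ℕ)

private lemma flower_adj_iff (p q : Fin 4 × ZMod (2*k+1)) :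
    (flowerSnark k).Adj p q ↔ p ≠ q ∧ (flowerRel k p q ∨ flowerRel k q p) :=
  SimpleGraph.fromRel_adj _ p q

private lemma flower_cast_val (x : ZMod (2*k+1)) : ((x.val : ℕ) : ZMod (2*k+1)) = x :=
  ZMod.natCast_rightInverse x

/-- The outer (x/y) cycle of length `2(2k+1)`, parametrized by naturals. -/
private def fOut (n : ℕ) : Fin 4 × ZMod (2*k+1) :=
  (if k+1 ≤ n % (2*(2*k+1)) ∧ n % (2*(2*k+1)) ≤ 3*k+1 then 2 else 1, (n : ZMod (2*k+1)))

private lemma fOut_fst_eq (n : ℕ) :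
    (fOut k n).1 = if k+1 ≤ n % (2*(2*k+1)) ∧ n % (2*(2*k+1)) ≤ 3*k+1 then 2 else 1 := rfl

private lemma fOut_snd_eq (n : ℕ) : (fOut k n).2 = (n : ZMod (2*k+1)) := rfl

private lemma fOut_fst_ne (n : ℕ) : (fOut k n).1 ≠ 3 := by
  rw [fOut_fst_eq]; split
  · decide
  · decide

private lemma flower_mod_mod (n : ℕ) :
    n % (2*k+1) = (n % (2*(2*k+1))) % (2*k+1) :=
  (Nat.mod_mod_of_dvd n ⟨2, by ring⟩).symm

private lemma flower_mod_small {r : ℕ} (h : r < 2*(2*k+1)) :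
    (r % (2*k+1) = r ∧ r < 2*k+1) ∨ (r % (2*k+1) = r - (2*k+1) ∧ 2*k+1 ≤ r) := by
  rcases Nat.lt_or_ge r (2*k+1) with h' | h'
  · exact Or.inl ⟨Nat.mod_eq_of_lt h', h'⟩
  · refine Or.inr ⟨?_, h'⟩
    rw [Nat.mod_eq_sub_mod h', Nat.mod_eq_of_lt (by omega)]

private lemma flower_succ_mod (n : ℕ) :
    (n+1) % (2*(2*k+1)) = n % (2*(2*k+1)) + 1 ∨
      (n % (2*(2*k+1)) = 2*(2*k+1) - 1 ∧ (n+1) % (2*(2*k+1)) = 0) := by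
  have h : n % (2*(2*k+1)) < 2*(2*k+1) := Nat.mod_lt _ (by omega)
  by_cases hl : n % (2*(2*k+1)) = 2*(2*k+1) - 1
  · right
    refine ⟨hl, ?_⟩
    rw [Nat.add_mod, hl, Nat.mod_eq_of_lt (show (1:ℕ) < 2*(2*k+1) by omega)]
    have h2 : 2*(2*k+1) - 1 + 1 = 2*(2*k+1) := by omega
    rw [h2, Nat.mod_self]
  · left
    rw [Nat.add_mod, Nat.mod_eq_of_lt (show (1:ℕ) < 2*(2*k+1) by omega),
      Nat.mod_eq_of_lt (by omega)]

private lemma flower_cast_succ_ne (hk : 1 ≤ k) (n : ℕ) :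
    ((n : ℕ) : ZMod (2*k+1)) ≠ ((n+1 : ℕ) : ZMod (2*k+1)) := by
  haveI : Fact (1 < 2*k+1) := ⟨by omega⟩
  intro h
  push_cast at h
  exact one_ne_zero (left_eq_add.mp h)

private lemma flower_cast_eq_k_iff (n : ℕ) :
    ((n : ℕ) : ZMod (2*k+1)) = (k : ZMod (2*k+1)) ↔ n % (2*k+1) = k := by
  rw [ZMod.natCast_eq_natCast_iff', Nat.mod_eq_of_lt (show k < 2*k+1 by omega)]

/-- consecutive outer-cycle vertices are adjacent -/
private lemma fOut_adj (hk : 1 ≤ k) (n : ℕ) :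
    (flowerSnark k).Adj (fOut k n) (fOut k (n+1)) := by
  have hrM : n % (2*(2*k+1)) < 2*(2*k+1) := Nat.mod_lt _ (by omega)
  have hmm := flower_mod_mod k n
  have hmm' := flower_mod_mod k (n+1)
  have hsm := flower_mod_small k hrM
  have hsucc := flower_succ_mod k n
  have hsnd : (fOut k (n+1)).2 = (fOut k n).2 + 1 := by
    rw [fOut_snd_eq, fOut_snd_eq]; push_cast; ring
  rw [flower_adj_iff]
  constructor
  · intro h
    exact flower_cast_succ_ne k hk n (congrArg Prod.snd h)
  · left
    by_cases hA : n % (2*(2*k+1)) = k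
    · -- twist edge x_k — y_{k+1}
      have hr' : (n+1) % (2*(2*k+1)) = k + 1 := by omega
      have hp1 : (fOut k n).1 = 1 := by rw [fOut_fst_eq, if_neg (by omega)]
      have hq1 : (fOut k (n+1)).1 = 2 := by rw [fOut_fst_eq, if_pos (by omega)]
      have hp2 : (fOut k n).2 = (k : ZMod (2*k+1)) := by
        rw [fOut_snd_eq, flower_cast_eq_k_iff]; omega
      exact Or.inr (Or.inr (Or.inr (Or.inr (Or.inl
        ⟨hp1, hq1, hp2, by rw [hsnd, hp2]⟩))))
    · by_cases hB : n % (2*(2*k+1)) = 3*k+1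
      · -- twist edge y_k — x_{k+1}
        have hr' : (n+1) % (2*(2*k+1)) = 3*k + 2 := by omega
        have hp1 : (fOut k n).1 = 2 := by rw [fOut_fst_eq, if_pos (by omega)]
        have hq1 : (fOut k (n+1)).1 = 1 := by rw [fOut_fst_eq, if_neg (by omega)]
        have hp2 : (fOut k n).2 = (k : ZMod (2*k+1)) := by
          rw [fOut_snd_eq, flower_cast_eq_k_iff]; omega
        exact Or.inr (Or.inr (Or.inr (Or.inr (Or.inr
          ⟨hp1, hq1, hp2, by rw [hsnd, hp2]⟩))))
      · -- ordinary outer edge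
        have hp2k : (fOut k n).2 ≠ (k : ZMod (2*k+1)) := by
          rw [fOut_snd_eq, Ne, flower_cast_eq_k_iff]; omega
        by_cases hreg : k+1 ≤ n % (2*(2*k+1)) ∧ n % (2*(2*k+1)) ≤ 3*k+1
        · -- y-side edge
          have hp1 : (fOut k n).1 = 2 := by rw [fOut_fst_eq, if_pos hreg]
          have hq1 : (fOut k (n+1)).1 = 2 := by rw [fOut_fst_eq, if_pos (by omega)]
          exact Or.inr (Or.inr (Or.inr (Or.inl ⟨hp1, hq1, hsnd, hp2k⟩)))
        · -- x-side edge
          have hp1 : (fOut k n).1 = 1 := by rw [fOut_fst_eq, if_neg hreg]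
          have hq1 : (fOut k (n+1)).1 = 1 := by rw [fOut_fst_eq, if_neg (by omega)]
          exact Or.inr (Or.inr (Or.inl ⟨hp1, hq1, hsnd, hp2k⟩))

private lemma flower_adj_v (hk : 1 ≤ k) (i : ZMod (2*k+1)) :
    (flowerSnark k).Adj (0, i) (0, i+1) := by
  haveI : Fact (1 < 2*k+1) := ⟨by omega⟩
  rw [flower_adj_iff]
  refine ⟨?_, Or.inl (Or.inr (Or.inl ⟨rfl, rfl, rfl⟩))⟩
  intro h
  have h2 : i = i + 1 := congrArg Prod.snd h
  exact one_ne_zero (left_eq_add.mp h2)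

private lemma flower_adj_spoke (t : Fin 4) (ht : t ≠ 3) (i : ZMod (2*k+1)) :
    (flowerSnark k).Adj (3, i) (t, i) := by
  rw [flower_adj_iff]
  refine ⟨?_, Or.inl (Or.inl ⟨rfl, ht, rfl⟩)⟩
  intro h
  exact ht (congrArg Prod.fst h).symm

private lemma flower_adj_z_fOut (a : ℕ) :
    (flowerSnark k).Adj (3, ((a : ℕ) : ZMod (2*k+1))) (fOut k a) := by
  rw [flower_adj_iff]
  refine ⟨?_, Or.inl (Or.inl ⟨rfl, fOut_fst_ne k a, rfl⟩)⟩
  intro h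
  exact fOut_fst_ne k a (congrArg Prod.fst h).symm

private lemma flower_edist_adj {p q : Fin 4 × ZMod (2*k+1)}
    (h : (flowerSnark k).Adj p q) : (flowerSnark k).edist p q ≤ 1 :=
  (SimpleGraph.edist_eq_one_iff_adj.mpr h).le

private lemma flower_edist_v (hk : 1 ≤ k) (i : ZMod (2*k+1)) (n : ℕ) :
    (flowerSnark k).edist (0, i) (0, i + (n : ℕ)) ≤ (n : ℕ∞) := by
  induction n with
  | zero => simp
  | succ n ih =>
    have hstep : (flowerSnark k).Adj (0, i + (n : ℕ)) (0, i + ((n+1 : ℕ) : ZMod (2*k+1))) := by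
      have h := flower_adj_v k hk (i + (n : ℕ))
      have he : i + ((n+1 : ℕ) : ZMod (2*k+1)) = i + (n : ℕ) + 1 := by push_cast; ring
      rw [he]
      exact h
    calc (flowerSnark k).edist (0, i) (0, i + ((n+1 : ℕ) : ZMod (2*k+1)))
        ≤ (flowerSnark k).edist (0, i) (0, i + (n : ℕ))
          + (flowerSnark k).edist (0, i + (n : ℕ)) (0, i + ((n+1 : ℕ) : ZMod (2*k+1))) :=
          SimpleGraph.edist_triangle
      _ ≤ (n : ℕ∞) + 1 := add_le_add ih (flower_edist_adj k hstep)
      _ = ((n+1 : ℕ) : ℕ∞) := by push_cast; ring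

private lemma flower_edist_fOut (hk : 1 ≤ k) (a n : ℕ) :
    (flowerSnark k).edist (fOut k a) (fOut k (a + n)) ≤ (n : ℕ∞) := by
  induction n with
  | zero => simp
  | succ n ih =>
    have hstep := fOut_adj k hk (a + n)
    have he : a + (n + 1) = (a + n) + 1 := by ring
    rw [he]
    calc (flowerSnark k).edist (fOut k a) (fOut k ((a+n)+1))
        ≤ (flowerSnark k).edist (fOut k a) (fOut k (a+n))
          + (flowerSnark k).edist (fOut k (a+n)) (fOut k ((a+n)+1)) :=
          SimpleGraph.edist_triangle
      _ ≤ (n : ℕ∞) + 1 := add_le_add ih (flower_edist_adj k hstep)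
      _ = ((n+1 : ℕ) : ℕ∞) := by push_cast; ring

private lemma flower_edist_vv (hk : 1 ≤ k) (i j : ZMod (2*k+1)) :
    (flowerSnark k).edist (0, i) (0, j) ≤ (k : ℕ∞) := by
  have hnlt := ZMod.val_lt (j - i)
  have hn'lt := ZMod.val_lt (i - j)
  have hj : i + (((j - i).val : ℕ) : ZMod (2*k+1)) = j := by
    rw [flower_cast_val]; ring
  have hi : j + (((i - j).val : ℕ) : ZMod (2*k+1)) = i := by
    rw [flower_cast_val]; ring
  rcases le_or_gt (j - i).val k with hcase | hcase
  · have := flower_edist_v k hk i (j - i).val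
    rw [hj] at this
    exact this.trans (by exact_mod_cast hcase)
  · -- go the other way round
    rcases Nat.eq_zero_or_pos (i - j).val with h0 | hpos
    · have h1 : i - j = 0 := (ZMod.val_eq_zero _).mp h0
      have h2 : i = j := by
        have := sub_eq_zero.mp h1; exact this
      rw [h2, SimpleGraph.edist_self]
      exact zero_le
    · have hsum : (2*k+1) ∣ ((j - i).val + (i - j).val) := by
        have hz : (((j - i).val + (i - j).val : ℕ) : ZMod (2*k+1)) = 0 := by
          rw [Nat.cast_add, flower_cast_val, flower_cast_val]; ring
        exact (ZMod.natCast_eq_zero_iff _ _).mp hz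
      obtain ⟨c, hc⟩ := hsum
      have hc1 : c = 1 := by
        rcases c with _ | _ | c
        · omega
        · rfl
        · exfalso
          have h2 : (2*k+1) * 2 ≤ (2*k+1) * (c+2) := Nat.mul_le_mul_left _ (by omega)
          have h3 : (2*k+1) * (c+1+1) = (2*k+1) * (c+2) := by ring
          omega
      rw [hc1, mul_one] at hc
      have hle : (i - j).val ≤ k := by omega
      have := flower_edist_v k hk j (i - j).val
      rw [hi] at this
      rw [SimpleGraph.edist_comm]
      exact this.trans (by exact_mod_cast Nat.cast_le.mpr hle)

/-- every outer vertex is `fOut` of an arbitrarily large parameter -/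
private lemma fOut_rep (hk : 1 ≤ k) (t : Fin 4) (ht : t = 1 ∨ t = 2)
    (j : ZMod (2*k+1)) (b : ℕ) : ∃ c : ℕ, b ≤ c ∧ fOut k c = (t, j) := by
  have hjv := ZMod.val_lt j
  have hb1 : 2*(b+1) ≤ (2*k+1) * (2*(b+1)) := Nat.le_mul_of_pos_left _ (by omega)
  have hb2 : 2*(b+1)+1 ≤ (2*k+1) * (2*(b+1)+1) := Nat.le_mul_of_pos_left _ (by omega)
  have hsnd : ∀ s : ℕ, (((j.val + (2*k+1) * s : ℕ)) : ZMod (2*k+1)) = j := by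
    intro s
    rw [Nat.cast_add, Nat.cast_mul, ZMod.natCast_self, zero_mul, add_zero, flower_cast_val]
  have hm1 : (j.val + (2*k+1) * (2*(b+1))) % (2*(2*k+1)) = j.val := by
    have he : j.val + (2*k+1) * (2*(b+1)) = j.val + (2*(2*k+1)) * (b+1) := by ring
    rw [he, Nat.add_mul_mod_self_left, Nat.mod_eq_of_lt (by omega)]
  have hm2 : (j.val + (2*k+1) * (2*(b+1)+1)) % (2*(2*k+1)) = j.val + (2*k+1) := by
    have he : j.val + (2*k+1) * (2*(b+1)+1) = (j.val + (2*k+1)) + (2*(2*k+1)) * (b+1) := by ring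
    rw [he, Nat.add_mul_mod_self_left, Nat.mod_eq_of_lt (by omega)]
  by_cases hreg : k+1 ≤ j.val
  · -- j.val in y-region for c1; x-vertex realized by c2
    rcases ht with ht | ht
    · refine ⟨j.val + (2*k+1) * (2*(b+1)+1), by omega, ?_⟩
      have h1 : (fOut k (j.val + (2*k+1) * (2*(b+1)+1))).1 = 1 := by
        rw [fOut_fst_eq, hm2, if_neg (by omega)]
      exact Prod.ext (h1.trans ht.symm) (hsnd _)
    · refine ⟨j.val + (2*k+1) * (2*(b+1)), by omega, ?_⟩
      have h1 : (fOut k (j.val + (2*k+1) * (2*(b+1)))).1 = 2 := by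
        rw [fOut_fst_eq, hm1, if_pos (by omega)]
      exact Prod.ext (h1.trans ht.symm) (hsnd _)
  · rcases ht with ht | ht
    · refine ⟨j.val + (2*k+1) * (2*(b+1)), by omega, ?_⟩
      have h1 : (fOut k (j.val + (2*k+1) * (2*(b+1)))).1 = 1 := by
        rw [fOut_fst_eq, hm1, if_neg (by omega)]
      exact Prod.ext (h1.trans ht.symm) (hsnd _)
    · refine ⟨j.val + (2*k+1) * (2*(b+1)+1), by omega, ?_⟩
      have h1 : (fOut k (j.val + (2*k+1) * (2*(b+1)+1))).1 = 2 := by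
        rw [fOut_fst_eq, hm2, if_pos (by omega)]
      exact Prod.ext (h1.trans ht.symm) (hsnd _)

private lemma flower_edist_zout (hk : 1 ≤ k) (i j : ZMod (2*k+1))
    (t : Fin 4) (ht : t = 1 ∨ t = 2) :
    (flowerSnark k).edist (3, i) (t, j) ≤ (k : ℕ∞) + 1 := by
  obtain ⟨c, hc, hfc⟩ := fOut_rep k hk t ht j (i.val + (2*k+1))
  have hilt := ZMod.val_lt i
  have hmd := Nat.mod_add_div (c - i.val) (2*k+1)
  set n := (c - i.val) % (2*k+1) with hn
  set q := (c - i.val) / (2*k+1) with hq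
  have hnlt : n < 2*k+1 := Nat.mod_lt _ (by omega)
  have hcast : ∀ s : ℕ, (((i.val + (2*k+1) * s : ℕ)) : ZMod (2*k+1)) = i := by
    intro s
    rw [Nat.cast_add, Nat.cast_mul, ZMod.natCast_self, zero_mul, add_zero, flower_cast_val]
  rcases le_or_gt n k with hcase | hcase
  · -- forward route
    have hac : (i.val + (2*k+1)*q) + n = c := by omega
    have h1 : (flowerSnark k).edist (3, i) (fOut k (i.val + (2*k+1)*q)) ≤ 1 := by
      have := flower_adj_z_fOut k (i.val + (2*k+1)*q)
      rw [hcast q] at this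
      exact flower_edist_adj k this
    have h2 := flower_edist_fOut k hk (i.val + (2*k+1)*q) n
    rw [hac, hfc] at h2
    calc (flowerSnark k).edist (3, i) (t, j)
        ≤ (flowerSnark k).edist (3, i) (fOut k (i.val + (2*k+1)*q))
          + (flowerSnark k).edist (fOut k (i.val + (2*k+1)*q)) (t, j) :=
          SimpleGraph.edist_triangle
      _ ≤ 1 + (n : ℕ∞) := add_le_add h1 h2
      _ ≤ 1 + (k : ℕ∞) := add_le_add_right (by exact_mod_cast hcase) _
      _ = (k : ℕ∞) + 1 := add_comm _ _
  · -- backward route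
    have hmul : (2*k+1)*(q+1) = (2*k+1)*q + (2*k+1) := by ring
    have hac : c + ((2*k+1) - n) = i.val + (2*k+1)*(q+1) := by omega
    have h1 : (flowerSnark k).edist (3, i) (fOut k (i.val + (2*k+1)*(q+1))) ≤ 1 := by
      have := flower_adj_z_fOut k (i.val + (2*k+1)*(q+1))
      rw [hcast (q+1)] at this
      exact flower_edist_adj k this
    have h2 := flower_edist_fOut k hk c ((2*k+1) - n)
    rw [hac, hfc] at h2
    calc (flowerSnark k).edist (3, i) (t, j)
        ≤ (flowerSnark k).edist (3, i) (fOut k (i.val + (2*k+1)*(q+1)))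
          + (flowerSnark k).edist (fOut k (i.val + (2*k+1)*(q+1))) (t, j) :=
          SimpleGraph.edist_triangle
      _ ≤ 1 + ((2*k+1 - n : ℕ) : ℕ∞) := by
          refine add_le_add h1 ?_
          rw [SimpleGraph.edist_comm] at h2
          exact h2
      _ ≤ 1 + (k : ℕ∞) := add_le_add_right (by exact_mod_cast (by omega : 2*k+1-n ≤ k)) _
      _ = (k : ℕ∞) + 1 := add_comm _ _

end FlowerAux

section FlowerAux2

variable (k : ℕ)

private lemma flower_edist_vz (hk : 1 ≤ k) (i j : ZMod (2*k+1)) :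
    (flowerSnark k).edist (0, i) (3, j) ≤ (k : ℕ∞) + 1 := by
  have h1 := flower_edist_vv k hk i j
  have h2 : (flowerSnark k).edist (0, j) ((3 : Fin 4), j) ≤ 1 := by
    rw [SimpleGraph.edist_comm]
    exact flower_edist_adj k (flower_adj_spoke k 0 (by decide) j)
  calc (flowerSnark k).edist (0, i) (3, j)
      ≤ (flowerSnark k).edist (0, i) (0, j) + (flowerSnark k).edist (0, j) (3, j) :=
        SimpleGraph.edist_triangle
    _ ≤ (k : ℕ∞) + 1 := add_le_add h1 h2

private lemma flower_edist_zz (hk : 1 ≤ k) (i j : ZMod (2*k+1)) :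
    (flowerSnark k).edist (3, i) (3, j) ≤ (k : ℕ∞) + 2 := by
  have h1 : (flowerSnark k).edist ((3 : Fin 4), i) (0, i) ≤ 1 :=
    flower_edist_adj k (flower_adj_spoke k 0 (by decide) i)
  have h2 := flower_edist_vz k hk i j
  calc (flowerSnark k).edist (3, i) (3, j)
      ≤ (flowerSnark k).edist (3, i) (0, i) + (flowerSnark k).edist (0, i) (3, j) :=
        SimpleGraph.edist_triangle
    _ ≤ 1 + ((k : ℕ∞) + 1) := add_le_add h1 h2
    _ = (k : ℕ∞) + 2 := by
        rw [add_comm 1 ((k : ℕ∞) + 1), add_assoc]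
        norm_num

private lemma flower_edist_vx (hk : 1 ≤ k) (i j : ZMod (2*k+1))
    (t : Fin 4) (ht : t = 1 ∨ t = 2) :
    (flowerSnark k).edist (0, i) (t, j) ≤ (k : ℕ∞) + 2 := by
  have h1 := flower_edist_vz k hk i j
  have h2 : (flowerSnark k).edist ((3 : Fin 4), j) (t, j) ≤ 1 := by
    refine flower_edist_adj k (flower_adj_spoke k t ?_ j)
    rcases ht with ht | ht <;> rw [ht] <;> decide
  calc (flowerSnark k).edist (0, i) (t, j)
      ≤ (flowerSnark k).edist (0, i) (3, j) + (flowerSnark k).edist (3, j) (t, j) :=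
        SimpleGraph.edist_triangle
    _ ≤ ((k : ℕ∞) + 1) + 1 := add_le_add h1 h2
    _ = (k : ℕ∞) + 2 := by rw [add_assoc]; norm_num

private lemma flower_edist_xx (hk : 1 ≤ k) (i j : ZMod (2*k+1))
    (s t : Fin 4) (hs : s = 1 ∨ s = 2) (ht : t = 1 ∨ t = 2) :
    (flowerSnark k).edist (s, i) (t, j) ≤ (k : ℕ∞) + 2 := by
  have h1 : (flowerSnark k).edist (s, i) ((3 : Fin 4), i) ≤ 1 := by
    rw [SimpleGraph.edist_comm]
    refine flower_edist_adj k (flower_adj_spoke k s ?_ i)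
    rcases hs with hs | hs <;> rw [hs] <;> decide
  have h2 := flower_edist_zout k hk i j t ht
  calc (flowerSnark k).edist (s, i) (t, j)
      ≤ (flowerSnark k).edist (s, i) (3, i) + (flowerSnark k).edist (3, i) (t, j) :=
        SimpleGraph.edist_triangle
    _ ≤ 1 + ((k : ℕ∞) + 1) := add_le_add h1 h2
    _ = (k : ℕ∞) + 2 := by
        rw [add_comm 1 ((k : ℕ∞) + 1), add_assoc]
        norm_num

private lemma flower_upper (hk : 1 ≤ k) (u w : Fin 4 × ZMod (2*k+1)) :
    (flowerSnark k).edist u w ≤ (k : ℕ∞) + 2 := by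
  obtain ⟨s, i⟩ := u
  obtain ⟨t, j⟩ := w
  have hk2 : (k : ℕ∞) ≤ (k : ℕ∞) + 2 := le_self_add
  have hk12 : (k : ℕ∞) + 1 ≤ (k : ℕ∞) + 2 := add_le_add_right one_le_two _
  fin_cases s <;> fin_cases t
  · exact (flower_edist_vv k hk i j).trans hk2
  · exact flower_edist_vx k hk i j 1 (Or.inl rfl)
  · exact flower_edist_vx k hk i j 2 (Or.inr rfl)
  · exact (flower_edist_vz k hk i j).trans hk12
  · rw [SimpleGraph.edist_comm]
    exact flower_edist_vx k hk j i 1 (Or.inl rfl)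
  · exact flower_edist_xx k hk i j 1 1 (Or.inl rfl) (Or.inl rfl)
  · exact flower_edist_xx k hk i j 1 2 (Or.inl rfl) (Or.inr rfl)
  · rw [SimpleGraph.edist_comm]
    exact (flower_edist_zout k hk j i 1 (Or.inl rfl)).trans hk12
  · rw [SimpleGraph.edist_comm]
    exact flower_edist_vx k hk j i 2 (Or.inr rfl)
  · exact flower_edist_xx k hk i j 2 1 (Or.inr rfl) (Or.inl rfl)
  · exact flower_edist_xx k hk i j 2 2 (Or.inr rfl) (Or.inr rfl)
  · rw [SimpleGraph.edist_comm]
    exact (flower_edist_zout k hk j i 2 (Or.inr rfl)).trans hk12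
  · rw [SimpleGraph.edist_comm]
    exact (flower_edist_vz k hk j i).trans hk12
  · exact (flower_edist_zout k hk i j 1 (Or.inl rfl)).trans hk12
  · exact (flower_edist_zout k hk i j 2 (Or.inr rfl)).trans hk12
  · exact flower_edist_zz k hk i j

/-- the potential function used for the lower bound -/
private def gLow (p : Fin 4 × ZMod (2*k+1)) : ℤ :=
  if p.1 = 3 then
    (if p.2 = 0 then -1 else ((min p.2.val (2*k+1 - p.2.val) : ℕ) : ℤ) + 1)
  else ((min p.2.val (2*k+1 - p.2.val) : ℕ) : ℤ)

private lemma gLow_rel (hk : 1 ≤ k) {p q : Fin 4 × ZMod (2*k+1)}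
    (h : flowerRel k p q) :
    gLow k p - gLow k q ≤ 1 ∧ gLow k q - gLow k p ≤ 1 := by
  haveI : Fact (1 < 2*k+1) := ⟨by omega⟩
  have hstep : ∀ a b : ZMod (2*k+1), b = a + 1 → a.1 ≠ 3 → True := fun _ _ _ _ => trivial
  rcases h with ⟨h1, h2, h3⟩ | ⟨h1, h2, h3⟩ | ⟨h1, h2, h3, _⟩ | ⟨h1, h2, h3, _⟩ |
    ⟨h1, h2, h3, h4⟩ | ⟨h1, h2, h3, h4⟩
  · -- spoke
    simp only [gLow, h1, h2, h3, if_pos rfl, if_neg h2]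
    by_cases h0 : q.2 = 0
    · rw [if_pos h0, h0]
      simp
    · rw [if_neg h0]
      omega
  all_goals {
    -- a step along a cycle: q.2 = p.2 + 1 (for the twist cases, from h3 and h4)
    have h13 : p.1 ≠ 3 := by rw [h1]; decide
    have h23 : q.1 ≠ 3 := by rw [h2]; decide
    have hq2 : q.2 = p.2 + 1 := by first
      | exact h3
      | (rw [h4, h3])
    have hv : q.2.val = (p.2.val + 1) % (2*k+1) := by
      rw [hq2, ZMod.val_add, ZMod.val_one]
    have hplt := ZMod.val_lt p.2
    have hvv : q.2.val = p.2.val + 1 ∨ (p.2.val = 2*k ∧ q.2.val = 0) := by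
      rcases Nat.lt_or_ge (p.2.val + 1) (2*k+1) with h' | h'
      · left; rw [hv, Nat.mod_eq_of_lt h']
      · right
        have he : p.2.val + 1 = 2*k+1 := by omega
        rw [hv, he, Nat.mod_self]
        omega
    simp only [gLow, if_neg h13, if_neg h23]
    constructor <;> (push_cast; omega)
  }

private lemma gLow_walk (hk : 1 ≤ k) {u w : Fin 4 × ZMod (2*k+1)}
    (p : (flowerSnark k).Walk u w) :
    gLow k u - gLow k w ≤ (p.length : ℤ) ∧ gLow k w - gLow k u ≤ (p.length : ℤ) := by
  induction p with
  | nil => simp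
  | @cons a b c h q ih =>
    obtain ⟨-, hrel | hrel⟩ := (flower_adj_iff k _ _).mp h
    · have hb := gLow_rel k hk hrel
      simp only [SimpleGraph.Walk.length_cons]
      push_cast
      constructor <;> linarith [ih.1, ih.2, hb.1, hb.2]
    · have hb := gLow_rel k hk hrel
      simp only [SimpleGraph.Walk.length_cons]
      push_cast
      constructor <;> linarith [ih.1, ih.2, hb.1, hb.2]

private lemma flower_lower (hk : 1 ≤ k) :
    (k : ℕ∞) + 2 ≤ (flowerSnark k).edist ((3 : Fin 4), (0 : ZMod (2*k+1)))
      ((3 : Fin 4), (k : ZMod (2*k+1))) := by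
  rw [SimpleGraph.edist_eq_sInf]
  refine le_sInf ?_
  rintro x ⟨p, rfl⟩
  have h := (gLow_walk k hk p).2
  have h0 : gLow k ((3 : Fin 4), (0 : ZMod (2*k+1))) = -1 := by
    simp [gLow]
  have hval : ((k : ZMod (2*k+1))).val = k := by
    rw [ZMod.val_natCast, Nat.mod_eq_of_lt (by omega)]
  have hne : ((k : ZMod (2*k+1))) ≠ 0 := by
    rw [Ne, ← ZMod.val_eq_zero, hval]
    omega
  have hkk : gLow k ((3 : Fin 4), (k : ZMod (2*k+1))) = (k : ℤ) + 1 := by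
    have h1 : gLow k ((3 : Fin 4), (k : ZMod (2*k+1)))
        = ((min ((k : ZMod (2*k+1))).val (2*k+1 - ((k : ZMod (2*k+1))).val) : ℕ) : ℤ) + 1 := by
      simp only [gLow, if_true]
      rw [if_neg hne]
    rw [h1, hval]
    push_cast
    omega
  rw [h0, hkk] at h
  have hlen : k + 2 ≤ p.length := by omega
  exact (by exact_mod_cast hlen : (k : ℕ∞) + 2 ≤ ((p.length : ℕ) : ℕ∞))

end FlowerAux2

/-- for every k ≥ 1, the Flower snark J_{2k+1} has diameter k + 2. -/
theorem flowerSnark_diam (k : ℕ) (hk : 1 ≤ k) :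
    (flowerSnark k).diam = k + 2 := by
  have hed : (flowerSnark k).ediam = ((k + 2 : ℕ) : ℕ∞) := by
    apply le_antisymm
    · refine SimpleGraph.ediam_le_of_edist_le fun u v => ?_
      have h := flower_upper k hk u v
      have he : ((k + 2 : ℕ) : ℕ∞) = (k : ℕ∞) + 2 := by push_cast; ring
      rw [he]; exact h
    · have he : ((k + 2 : ℕ) : ℕ∞) = (k : ℕ∞) + 2 := by push_cast; ring
      rw [he]
      exact (flower_lower k hk).trans SimpleGraph.edist_le_ediam
  have hdef : (flowerSnark k).diam = ((flowerSnark k).ediam).toNat := rfl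
  rw [hdef, hed, ENat.toNat_coe]

end Pebbling
end

section
/- The Flower snark J_m has girth m for m ∈ {3, 5}, and girth 6 for every odd m ≥ 7. -/
namespace Pebbling

variable {V : Type*}

section GirthAux

variable {k : ℕ}

lemma adj_iff {a b : Fin 4 × ZMod (2 * k + 1)} :
    (flowerSnark k).Adj a b ↔ a ≠ b ∧ (flowerRel k a b ∨ flowerRel k b a) :=
  SimpleGraph.fromRel_adj _ a b

lemma cast_nz (n : ℕ) (h0 : 0 < n) (hn : n < 2 * k + 1) : ((n : ℕ) : ZMod (2 * k + 1)) ≠ 0 := by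
  intro h
  rw [ZMod.natCast_eq_zero_iff] at h
  exact absurd (Nat.le_of_dvd h0 h) (by omega)

lemma spoke {a b : Fin 4 × ZMod (2 * k + 1)} (h : (flowerSnark k).Adj a b) (h3 : a.1 = 3) :
    b.1 ≠ 3 ∧ b.2 = a.2 := by
  rw [adj_iff] at h
  obtain ⟨hne, h | h⟩ := h <;>
    rcases h with ⟨h1, h2, h3'⟩ | ⟨h1, h2, h3'⟩ | ⟨h1, h2, h3', h4⟩ | ⟨h1, h2, h3', h4⟩ |
      ⟨h1, h2, h3', h4⟩ | ⟨h1, h2, h3', h4⟩ <;>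
    simp_all

lemma ring_step {a b : Fin 4 × ZMod (2 * k + 1)} (h : (flowerSnark k).Adj a b)
    (ha : a.1 ≠ 3) (hb : b.1 ≠ 3) : b.2 = a.2 + 1 ∨ a.2 = b.2 + 1 := by
  rw [adj_iff] at h
  obtain ⟨hne, h | h⟩ := h <;>
    rcases h with ⟨h1, h2, h3'⟩ | ⟨h1, h2, h3'⟩ | ⟨h1, h2, h3', h4⟩ | ⟨h1, h2, h3', h4⟩ |
      ⟨h1, h2, h3', h4⟩ | ⟨h1, h2, h3', h4⟩
  · exact absurd h1 ha
  · exact Or.inl h3'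
  · exact Or.inl h3'
  · exact Or.inl h3'
  · exact Or.inl (by rw [h4, h3'])
  · exact Or.inl (by rw [h4, h3'])
  · exact absurd h1 hb
  · exact Or.inr h3'
  · exact Or.inr h3'
  · exact Or.inr h3'
  · exact Or.inr (by rw [h4, h3'])
  · exact Or.inr (by rw [h4, h3'])

lemma ring_type {a b : Fin 4 × ZMod (2 * k + 1)} (h : (flowerSnark k).Adj a b)
    (ha : a.1 ≠ 3) (hb : b.1 ≠ 3) (hstep : b.2 = a.2 + 1) (h2 : (2 : ZMod (2 * k + 1)) ≠ 0) :
    (a.1 = 0 ∧ b.1 = 0) ∨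
      (a.1 ≠ 0 ∧ b.1 ≠ 0 ∧ (a.1 = b.1 ↔ a.2 ≠ (k : ZMod (2 * k + 1)))) := by
  rw [adj_iff] at h
  obtain ⟨hne, h | h⟩ := h <;>
    rcases h with ⟨h1, hq, h3'⟩ | ⟨h1, hq, h3'⟩ | ⟨h1, hq, h3', h4⟩ | ⟨h1, hq, h3', h4⟩ |
      ⟨h1, hq, h3', h4⟩ | ⟨h1, hq, h3', h4⟩
  · exact absurd h1 ha
  · exact Or.inl ⟨h1, hq⟩
  · refine Or.inr ⟨by rw [h1]; decide, by rw [hq]; decide, ?_⟩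
    simp [h1, hq, h4]
  · refine Or.inr ⟨by rw [h1]; decide, by rw [hq]; decide, ?_⟩
    simp [h1, hq, h4]
  · refine Or.inr ⟨by rw [h1]; decide, by rw [hq]; decide, ?_⟩
    rw [h1, hq, h3']
    simp
  · refine Or.inr ⟨by rw [h1]; decide, by rw [hq]; decide, ?_⟩
    rw [h1, hq, h3']
    simp
  · exact absurd h1 hb
  · exact absurd (by linear_combination -hstep - h3') h2
  · exact absurd (by linear_combination -hstep - h3') h2
  · exact absurd (by linear_combination -hstep - h3') h2
  · exact absurd (by linear_combination -hstep + h3' - h4) h2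
  · exact absurd (by linear_combination -hstep + h3' - h4) h2


lemma fin_aux : ∀ x y z : Fin 4, x ≠ 0 → x ≠ 3 → y ≠ 0 → y ≠ 3 → z ≠ 0 → z ≠ 3 →
    ((x = y) = (x = z)) → y = z := by decide

lemma plus_unique {a b c : Fin 4 × ZMod (2 * k + 1)} (h2 : (2 : ZMod (2 * k + 1)) ≠ 0)
    (hba : (flowerSnark k).Adj b a) (hbc : (flowerSnark k).Adj b c)
    (hb : b.1 ≠ 3) (ha : a.1 ≠ 3) (hc : c.1 ≠ 3)
    (hsa : a.2 = b.2 + 1) (hsc : c.2 = b.2 + 1) : a = c := by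
  have t1 := ring_type hba hb ha hsa h2
  have t2 := ring_type hbc hb hc hsc h2
  have hsnd : a.2 = c.2 := hsa.trans hsc.symm
  rcases t1 with ⟨hb0, ha0⟩ | ⟨hb0, ha0, hiff1⟩ <;>
    rcases t2 with ⟨hb0', hc0⟩ | ⟨hb0', hc0, hiff2⟩
  · exact Prod.ext (ha0.trans hc0.symm) hsnd
  · exact absurd hb0 hb0'
  · exact absurd hb0' hb0
  · refine Prod.ext (fin_aux b.1 a.1 c.1 hb0 hb ha0 ha hc0 hc ?_) hsnd
    rw [eq_iff_iff]
    rw [eq_comm (a := b.1) (b := a.1), eq_comm (a := b.1) (b := c.1)] at *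
    rw [hiff1, hiff2]

lemma minus_unique {a b c : Fin 4 × ZMod (2 * k + 1)} (h2 : (2 : ZMod (2 * k + 1)) ≠ 0)
    (hba : (flowerSnark k).Adj b a) (hbc : (flowerSnark k).Adj b c)
    (hb : b.1 ≠ 3) (ha : a.1 ≠ 3) (hc : c.1 ≠ 3)
    (hsa : b.2 = a.2 + 1) (hsc : c.2 + 1 = b.2) : a = c := by
  have hsnd : a.2 = c.2 := by linear_combination -hsa - hsc
  have t1 := ring_type hba.symm ha hb hsa h2
  have t2 := ring_type hbc.symm hc hb (by rw [hsc]) h2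
  rcases t1 with ⟨ha0, hb0⟩ | ⟨ha0, hb0, hiff1⟩ <;>
    rcases t2 with ⟨hc0, hb0'⟩ | ⟨hc0, hb0', hiff2⟩
  · exact Prod.ext (ha0.trans hc0.symm) hsnd
  · exact absurd hb0 hb0'
  · exact absurd hb0' hb0
  · rw [hsnd] at hiff1
    refine Prod.ext (fin_aux b.1 a.1 c.1 hb0 hb ha0 ha hc0 hc ?_) hsnd
    rw [eq_iff_iff, eq_comm (a := b.1) (b := a.1), eq_comm (a := b.1) (b := c.1), hiff1, hiff2]

lemma two_nz (hk : 2 ≤ k) : (2 : ZMod (2 * k + 1)) ≠ 0 := by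
  have := cast_nz (k := k) 2 (by norm_num) (by omega)
  simpa using this

lemma no3z (hk : 2 ≤ k) {a b c : Fin 4 × ZMod (2 * k + 1)} (ha3 : a.1 = 3)
    (hab : (flowerSnark k).Adj a b) (hbc : (flowerSnark k).Adj b c)
    (hca : (flowerSnark k).Adj c a) : False := by
  obtain ⟨hb3, hb2⟩ := spoke hab ha3
  obtain ⟨hc3, hc2⟩ := spoke hca.symm ha3
  rcases ring_step hbc hb3 hc3 with h | h
  · exact cast_nz (k := k) 1 one_pos (by omega)
      (by push_cast; linear_combination -h - hb2 + hc2)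
  · exact cast_nz (k := k) 1 one_pos (by omega)
      (by push_cast; linear_combination -h - hc2 + hb2)

lemma no3ring (hk : 2 ≤ k) {a b c : Fin 4 × ZMod (2 * k + 1)}
    (ha3 : a.1 ≠ 3) (hb3 : b.1 ≠ 3) (hc3 : c.1 ≠ 3)
    (hab : (flowerSnark k).Adj a b) (hbc : (flowerSnark k).Adj b c)
    (hca : (flowerSnark k).Adj c a) : False := by
  have h2 := two_nz hk
  rcases ring_step hab ha3 hb3 with s1 | s1
  · rcases ring_step hbc hb3 hc3 with s2 | s2
    · rcases ring_step hca hc3 ha3 with s3 | s3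
      · exact cast_nz (k := k) 3 (by norm_num) (by omega)
          (by push_cast; linear_combination -s1 - s2 - s3)
      · exact hbc.ne (plus_unique h2 hab hca.symm ha3 hb3 hc3 s1 s3)
    · exact hca.ne ((minus_unique h2 hab.symm hbc hb3 ha3 hc3 s1 s2.symm).symm)
  · rcases ring_step hbc hb3 hc3 with s2 | s2
    · exact hca.ne ((plus_unique h2 hab.symm hbc hb3 ha3 hc3 s1 s2).symm)
    · rcases ring_step hca hc3 ha3 with s3 | s3
      · exact hab.ne (plus_unique h2 hca hbc.symm hc3 ha3 hb3 s3 s2)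
      · exact cast_nz (k := k) 3 (by norm_num) (by omega)
          (by push_cast; linear_combination -s1 - s2 - s3)

lemma no3 (hk : 2 ≤ k) {a b c : Fin 4 × ZMod (2 * k + 1)}
    (hab : (flowerSnark k).Adj a b) (hbc : (flowerSnark k).Adj b c)
    (hca : (flowerSnark k).Adj c a) : False := by
  by_cases ha3 : a.1 = 3
  · exact no3z hk ha3 hab hbc hca
  by_cases hb3 : b.1 = 3
  · exact no3z hk hb3 hbc hca hab
  by_cases hc3 : c.1 = 3
  · exact no3z hk hc3 hca hab hbc
  exact no3ring hk ha3 hb3 hc3 hab hbc hca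

lemma no4z (hk : 2 ≤ k) {a b c d : Fin 4 × ZMod (2 * k + 1)} (ha3 : a.1 = 3)
    (hab : (flowerSnark k).Adj a b) (hbc : (flowerSnark k).Adj b c)
    (hcd : (flowerSnark k).Adj c d) (hda : (flowerSnark k).Adj d a)
    (hac : a ≠ c) (hbd : b ≠ d) : False := by
  have h2 := two_nz hk
  obtain ⟨hb3, hb2⟩ := spoke hab ha3
  obtain ⟨hd3, hd2⟩ := spoke hda.symm ha3
  by_cases hc3 : c.1 = 3
  · obtain ⟨_, hbc2⟩ := spoke hbc.symm hc3
    exact hac (Prod.ext (ha3.trans hc3.symm) (by rw [← hb2, hbc2]))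
  rcases ring_step hbc hb3 hc3 with s1 | s1 <;> rcases ring_step hcd hc3 hd3 with s2 | s2
  · exact h2 (by linear_combination -s1 - s2 + hd2 - hb2)
  · exact hbd (minus_unique h2 hbc.symm hcd hc3 hb3 hd3 s1 s2.symm)
  · exact hbd (plus_unique h2 hbc.symm hcd hc3 hb3 hd3 s1 s2)
  · exact h2 (by linear_combination -s1 - s2 - hd2 + hb2)

lemma no4ring (hk : 2 ≤ k) {a b c d : Fin 4 × ZMod (2 * k + 1)}
    (ha3 : a.1 ≠ 3) (hb3 : b.1 ≠ 3) (hc3 : c.1 ≠ 3) (hd3 : d.1 ≠ 3)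
    (hab : (flowerSnark k).Adj a b) (hbc : (flowerSnark k).Adj b c)
    (hcd : (flowerSnark k).Adj c d) (hda : (flowerSnark k).Adj d a)
    (hac : a ≠ c) (hbd : b ≠ d) : False := by
  have h2 := two_nz hk
  rcases ring_step hab ha3 hb3 with s1 | s1
  · rcases ring_step hbc hb3 hc3 with s2 | s2
    · rcases ring_step hcd hc3 hd3 with s3 | s3
      · rcases ring_step hda hd3 ha3 with s4 | s4
        · exact cast_nz (k := k) 4 (by norm_num) (by omega)
            (by push_cast; linear_combination -s1 - s2 - s3 - s4)
        · exact h2 (by linear_combination -s1 - s2 - s3 + s4)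
      · exact hbd (minus_unique h2 hbc.symm hcd hc3 hb3 hd3 s2 s3.symm)
    · exact hac (minus_unique h2 hab.symm hbc hb3 ha3 hc3 s1 s2.symm)
  · rcases ring_step hbc hb3 hc3 with s2 | s2
    · exact hac (plus_unique h2 hab.symm hbc hb3 ha3 hc3 s1 s2)
    · rcases ring_step hcd hc3 hd3 with s3 | s3
      · exact hbd (plus_unique h2 hbc.symm hcd hc3 hb3 hd3 s2 s3)
      · rcases ring_step hda hd3 ha3 with s4 | s4
        · exact h2 (by linear_combination -s1 - s2 - s3 + s4)
        · exact cast_nz (k := k) 4 (by norm_num) (by omega)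
            (by push_cast; linear_combination -s1 - s2 - s3 - s4)

lemma no4 (hk : 2 ≤ k) {a b c d : Fin 4 × ZMod (2 * k + 1)}
    (hab : (flowerSnark k).Adj a b) (hbc : (flowerSnark k).Adj b c)
    (hcd : (flowerSnark k).Adj c d) (hda : (flowerSnark k).Adj d a)
    (hac : a ≠ c) (hbd : b ≠ d) : False := by
  by_cases ha3 : a.1 = 3
  · exact no4z hk ha3 hab hbc hcd hda hac hbd
  by_cases hb3 : b.1 = 3
  · exact no4z hk hb3 hbc hcd hda hab hbd hac.symm
  by_cases hc3 : c.1 = 3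
  · exact no4z hk hc3 hcd hda hab hbc hac.symm hbd.symm
  by_cases hd3 : d.1 = 3
  · exact no4z hk hd3 hda hab hbc hcd hbd.symm hac
  exact no4ring hk ha3 hb3 hc3 hd3 hab hbc hcd hda hac hbd

lemma no5z (hk : 3 ≤ k) {a b c d e : Fin 4 × ZMod (2 * k + 1)} (ha3 : a.1 = 3)
    (hab : (flowerSnark k).Adj a b) (hbc : (flowerSnark k).Adj b c)
    (hcd : (flowerSnark k).Adj c d) (hde : (flowerSnark k).Adj d e)
    (hea : (flowerSnark k).Adj e a)
    (hac : a ≠ c) (had : a ≠ d) (hbd : b ≠ d) (hce : c ≠ e) : False := by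
  have h2 := two_nz (k := k) (by omega)
  obtain ⟨hb3, hb2⟩ := spoke hab ha3
  obtain ⟨he3, he2⟩ := spoke hea.symm ha3
  by_cases hc3 : c.1 = 3
  · obtain ⟨_, hbc2⟩ := spoke hbc.symm hc3
    exact hac (Prod.ext (ha3.trans hc3.symm) (by rw [← hb2, hbc2]))
  by_cases hd3 : d.1 = 3
  · obtain ⟨_, hde2⟩ := spoke hde hd3
    exact had (Prod.ext (ha3.trans hd3.symm) (by rw [← he2, hde2]))
  rcases ring_step hbc hb3 hc3 with s1 | s1
  · rcases ring_step hcd hc3 hd3 with s2 | s2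
    · rcases ring_step hde hd3 he3 with s3 | s3
      · exact cast_nz (k := k) 3 (by norm_num) (by omega)
          (by push_cast; linear_combination -s1 - s2 - s3 - hb2 + he2)
      · exact hce (minus_unique h2 hcd.symm hde hd3 hc3 he3 s2 s3.symm)
    · exact hbd (minus_unique h2 hbc.symm hcd hc3 hb3 hd3 s1 s2.symm)
  · rcases ring_step hcd hc3 hd3 with s2 | s2
    · exact hbd (plus_unique h2 hbc.symm hcd hc3 hb3 hd3 s1 s2)
    · rcases ring_step hde hd3 he3 with s3 | s3
      · exact hce (plus_unique h2 hcd.symm hde hd3 hc3 he3 s2 s3)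
      · exact cast_nz (k := k) 3 (by norm_num) (by omega)
          (by push_cast; linear_combination -s1 - s2 - s3 - he2 + hb2)

lemma no5ring (hk : 3 ≤ k) {a b c d e : Fin 4 × ZMod (2 * k + 1)}
    (ha3 : a.1 ≠ 3) (hb3 : b.1 ≠ 3) (hc3 : c.1 ≠ 3) (hd3 : d.1 ≠ 3) (he3 : e.1 ≠ 3)
    (hab : (flowerSnark k).Adj a b) (hbc : (flowerSnark k).Adj b c)
    (hcd : (flowerSnark k).Adj c d) (hde : (flowerSnark k).Adj d e)
    (hea : (flowerSnark k).Adj e a)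
    (hac : a ≠ c) (had : a ≠ d) (hbd : b ≠ d) (hbe : b ≠ e) (hce : c ≠ e) : False := by
  have h2 := two_nz (k := k) (by omega)
  rcases ring_step hab ha3 hb3 with s1 | s1
  · rcases ring_step hbc hb3 hc3 with s2 | s2
    · rcases ring_step hcd hc3 hd3 with s3 | s3
      · rcases ring_step hde hd3 he3 with s4 | s4
        · rcases ring_step hea he3 ha3 with s5 | s5
          · exact cast_nz (k := k) 5 (by norm_num) (by omega)
              (by push_cast; linear_combination -s1 - s2 - s3 - s4 - s5)
          · exact cast_nz (k := k) 3 (by norm_num) (by omega)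
              (by push_cast; linear_combination -s1 - s2 - s3 - s4 + s5)
        · exact hce (minus_unique h2 hcd.symm hde hd3 hc3 he3 s3 s4.symm)
      · exact hbd (minus_unique h2 hbc.symm hcd hc3 hb3 hd3 s2 s3.symm)
    · exact hac (minus_unique h2 hab.symm hbc hb3 ha3 hc3 s1 s2.symm)
  · rcases ring_step hbc hb3 hc3 with s2 | s2
    · exact hac (plus_unique h2 hab.symm hbc hb3 ha3 hc3 s1 s2)
    · rcases ring_step hcd hc3 hd3 with s3 | s3
      · exact hbd (plus_unique h2 hbc.symm hcd hc3 hb3 hd3 s2 s3)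
      · rcases ring_step hde hd3 he3 with s4 | s4
        · exact hce (plus_unique h2 hcd.symm hde hd3 hc3 he3 s3 s4)
        · rcases ring_step hea he3 ha3 with s5 | s5
          · exact cast_nz (k := k) 3 (by norm_num) (by omega)
              (by push_cast; linear_combination -s1 - s2 - s3 - s4 + s5)
          · exact cast_nz (k := k) 5 (by norm_num) (by omega)
              (by push_cast; linear_combination -s1 - s2 - s3 - s4 - s5)

lemma no5 (hk : 3 ≤ k) {a b c d e : Fin 4 × ZMod (2 * k + 1)}
    (hab : (flowerSnark k).Adj a b) (hbc : (flowerSnark k).Adj b c)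
    (hcd : (flowerSnark k).Adj c d) (hde : (flowerSnark k).Adj d e)
    (hea : (flowerSnark k).Adj e a)
    (hac : a ≠ c) (had : a ≠ d) (hbd : b ≠ d) (hbe : b ≠ e) (hce : c ≠ e) : False := by
  by_cases ha3 : a.1 = 3
  · exact no5z hk ha3 hab hbc hcd hde hea hac had hbd hce
  by_cases hb3 : b.1 = 3
  · exact no5z hk hb3 hbc hcd hde hea hab hbd hbe hce had.symm
  by_cases hc3 : c.1 = 3
  · exact no5z hk hc3 hcd hde hea hab hbc hce hac.symm had.symm hbe.symm
  by_cases hd3 : d.1 = 3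
  · exact no5z hk hd3 hde hea hab hbc hcd had.symm hbd.symm hbe.symm hac
  by_cases he3 : e.1 = 3
  · exact no5z hk he3 hea hab hbc hcd hde hbe.symm hce.symm hac hbd
  exact no5ring hk ha3 hb3 hc3 hd3 he3 hab hbc hcd hde hea hac had hbd hbe hce

open SimpleGraph in
lemma cycle_aux (hk : 2 ≤ k) {v : Fin 4 × ZMod (2 * k + 1)}
    {w : (flowerSnark k).Walk v v} (hw : w.IsCycle)
    (hlen : w.length ≤ 5) (h5 : w.length = 5 → 3 ≤ k) : False := by
  have hlen3 := hw.three_le_length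
  cases w with
  | nil => simp at hlen3
  | cons hab w =>
  cases w with
  | nil => simp at hlen3
  | cons hbc w =>
  cases w with
  | nil => simp at hlen3
  | cons hcd w =>
  cases w with
  | nil => exact no3 hk hab hbc hcd
  | cons hde w =>
  cases w with
  | nil =>
    have hn := hw.support_nodup
    simp [Walk.support_cons, List.nodup_cons] at hn
    obtain ⟨⟨hbc', hbd, hbv⟩, ⟨hcd', hcv⟩, hdv⟩ := hn
    exact no4 hk hab hbc hcd hde (Ne.symm hcv) hbd
  | cons hef w =>
  cases w with
  | nil =>
    have hn := hw.support_nodup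
    simp [Walk.support_cons, List.nodup_cons] at hn
    obtain ⟨⟨hbc', hbd, hbe, hbv⟩, ⟨hcd', hce, hcv⟩, ⟨hde', hdv⟩, hev⟩ := hn
    exact no5 (h5 (by simp)) hab hbc hcd hde hef (Ne.symm hcv) (Ne.symm hdv) hbd hbe hce
  | cons _ w =>
    simp [Walk.length_cons] at hlen
    omega

lemma cycle_ge5 (hk : 2 ≤ k) {v : Fin 4 × ZMod (2 * k + 1)}
    {w : (flowerSnark k).Walk v v} (hw : w.IsCycle) : 5 ≤ w.length := by
  by_contra h
  exact cycle_aux hk hw (by omega) (by omega)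

lemma cycle_ge6 (hk : 3 ≤ k) {v : Fin 4 × ZMod (2 * k + 1)}
    {w : (flowerSnark k).Walk v v} (hw : w.IsCycle) : 6 ≤ w.length := by
  by_contra h
  exact cycle_aux (by omega) hw (by omega) (fun _ => hk)

lemma adj_z (t : Fin 4) (ht : t ≠ 3) (i : ZMod (2 * k + 1)) :
    (flowerSnark k).Adj (3, i) (t, i) := by
  rw [adj_iff]
  exact ⟨by simp [Prod.ext_iff, Ne.symm ht], Or.inl (Or.inl ⟨rfl, ht, rfl⟩)⟩

lemma one_nz (hk : 1 ≤ k) : ((0 : ZMod (2 * k + 1)) + 1) ≠ 0 := by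
  rw [zero_add]
  have := cast_nz (k := k) 1 one_pos (by omega)
  simpa using this

lemma adj_v (hk : 1 ≤ k) (i : ZMod (2 * k + 1)) :
    (flowerSnark k).Adj (0, i) (0, i + 1) := by
  rw [adj_iff]
  refine ⟨?_, Or.inl (Or.inr (Or.inl ⟨rfl, rfl, rfl⟩))⟩
  simp only [Prod.ext_iff, ne_eq, not_and]
  intro _ h
  exact one_nz hk (by linear_combination -h)

lemma adj_x (hk : 1 ≤ k) (i : ZMod (2 * k + 1)) (hik : i ≠ (k : ZMod (2 * k + 1))) :
    (flowerSnark k).Adj (1, i) (1, i + 1) := by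
  rw [adj_iff]
  refine ⟨?_, Or.inl (Or.inr (Or.inr (Or.inl ⟨rfl, rfl, rfl, hik⟩)))⟩
  simp only [Prod.ext_iff, ne_eq, not_and]
  intro _ h
  exact one_nz hk (by linear_combination -h)

open SimpleGraph in
lemma egirth_le_of_cycle {V : Type*} {G : SimpleGraph V} {v : V} {w : G.Walk v v}
    (hw : w.IsCycle) : G.egirth ≤ (w.length : ℕ∞) :=
  (iInf_le _ v).trans ((iInf_le _ w).trans (iInf_le _ hw))

open SimpleGraph in
lemma egirth6 (hk : 3 ≤ k) : (flowerSnark k).egirth = 6 := by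
  have hk1 : 1 ≤ k := by omega
  have h0k : (0 : ZMod (2 * k + 1)) ≠ (k : ZMod (2 * k + 1)) := by
    intro h
    exact cast_nz (k := k) k (by omega) (by omega) h.symm
  let w : (flowerSnark k).Walk (3, 0) (3, 0) :=
    .cons (adj_z 0 (by decide) 0) (.cons (adj_v hk1 0)
      (.cons ((adj_z 0 (by decide) (0 + 1)).symm)
      (.cons (adj_z 1 (by decide) (0 + 1))
      (.cons ((adj_x hk1 0 h0k).symm)
      (.cons ((adj_z 1 (by decide) 0).symm) .nil)))))
  have hnz := one_nz hk1
  have h01 : (0 : ZMod (2 * k + 1)) ≠ 1 := by simpa using Ne.symm hnz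
  have hcyc : w.IsCycle := by
    rw [Walk.isCycle_def, Walk.isTrail_def]
    refine ⟨?_, by simp [w], ?_⟩
    · simp [w, Walk.edges_cons, List.nodup_cons, Prod.ext_iff, hnz, Ne.symm hnz, h01, Ne.symm h01]
    · simp [w, Walk.support_cons, List.nodup_cons, Prod.ext_iff, hnz, Ne.symm hnz, h01, Ne.symm h01]
  apply le_antisymm
  · have := egirth_le_of_cycle hcyc
    simpa [w] using this
  · rw [le_egirth]
    intro a w' hw'
    exact_mod_cast cycle_ge6 hk hw'

lemma tri1 : (flowerSnark 1).Adj (0, 0) (0, 1) :=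
  adj_iff.mpr (by unfold flowerRel; decide)
lemma tri2 : (flowerSnark 1).Adj (0, 1) (0, 2) :=
  adj_iff.mpr (by unfold flowerRel; decide)
lemma tri3 : (flowerSnark 1).Adj (0, 2) (0, 0) :=
  adj_iff.mpr (by unfold flowerRel; decide)

def w3 : (flowerSnark 1).Walk (0, 0) (0, 0) := .cons tri1 (.cons tri2 (.cons tri3 .nil))

open SimpleGraph in
lemma w3cyc : w3.IsCycle := by
  rw [SimpleGraph.Walk.isCycle_def, SimpleGraph.Walk.isTrail_def]
  refine ⟨by decide, by simp [w3], by decide⟩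

lemma pen1 : (flowerSnark 2).Adj (0, 0) (0, 1) :=
  adj_iff.mpr (by unfold flowerRel; decide)
lemma pen2 : (flowerSnark 2).Adj (0, 1) (0, 2) :=
  adj_iff.mpr (by unfold flowerRel; decide)
lemma pen3 : (flowerSnark 2).Adj (0, 2) (0, 3) :=
  adj_iff.mpr (by unfold flowerRel; decide)
lemma pen4 : (flowerSnark 2).Adj (0, 3) (0, 4) :=
  adj_iff.mpr (by unfold flowerRel; decide)
lemma pen5 : (flowerSnark 2).Adj (0, 4) (0, 0) :=
  adj_iff.mpr (by unfold flowerRel; decide)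

def w5 : (flowerSnark 2).Walk (0, 0) (0, 0) :=
  .cons pen1 (.cons pen2 (.cons pen3 (.cons pen4 (.cons pen5 .nil))))

open SimpleGraph in
lemma w5cyc : w5.IsCycle := by
  rw [SimpleGraph.Walk.isCycle_def, SimpleGraph.Walk.isTrail_def]
  refine ⟨by decide, by simp [w5], by decide⟩

lemma egirth3 : (flowerSnark 1).egirth = 3 :=
  le_antisymm (by simpa [w3] using egirth_le_of_cycle w3cyc) SimpleGraph.three_le_egirth

lemma egirth5 : (flowerSnark 2).egirth = 5 := by
  apply le_antisymm
  · simpa [w5] using egirth_le_of_cycle w5cyc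
  · rw [SimpleGraph.le_egirth]
    intro a w hw
    exact_mod_cast cycle_ge5 le_rfl hw

end GirthAux

/-- J_m has girth m for m ∈ {3, 5} and girth 6 for every odd m ≥ 7. -/
theorem flowerSnark_girth :
    (flowerSnark 1).girth = 3 ∧ (flowerSnark 2).girth = 5 ∧
      ∀ k : ℕ, 3 ≤ k → (flowerSnark k).girth = 6 := by
  refine ⟨?_, ?_, fun k hk => ?_⟩
  · simp [SimpleGraph.girth, egirth3]
  · simp [SimpleGraph.girth, egirth5]
  · simp [SimpleGraph.girth, egirth6 hk]

end Pebbling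
end
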